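/- arXiv:1805.06133 — 14 statements merged into one kernel-verified Lean document; each statement's English description precedes it below -/
import Mathlib

section
/- Let R be a ring with identity and a, b, c ∈ R satisfy a(ba)² = abaca = acaba = (ac)²a. If ac is nilpotent, then ba is nilpotent. -/
theorem stmt_0 {R : Type*} [Ring R] (a b c : R)
    (h1 : a * (b*a)^2 = a*b*a*c*a) (h2 : a*b*a*c*a = a*c*a*b*a)
    (h3 : a*c*a*b*a = (a*c)^2 * a)
    (hnil : IsNilpotent (a*c)) : IsNilpotent (b*a) := by
  obtain ⟨n, hn⟩ := hnil
  have key : ∀ k : ℕ, a * (b*a)^(k+2) = a * b * (a*c)^(k+1) * a := by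
    intro k
    induction k with
    | zero =>
      rw [h1]; noncomm_ring
    | succ k ih =>
      have : a * (b*a)^(k+3) = a * (b*a)^(k+2) * (b*a) := by
        rw [pow_succ]; noncomm_ring
      rw [this, ih]
      have h4 : (a*c)^(k+1) * (a*b*a) = (a*c)^(k+2) * a := by
        have : (a*c)^(k+1) * (a*b*a) = (a*c)^k * (a*c*a*b*a) := by
          rw [pow_succ]; noncomm_ring
        rw [this, h3, pow_succ, pow_succ]; noncomm_ring
      calc a * b * (a*c)^(k+1) * a * (b*a) = a * b * ((a*c)^(k+1) * (a*b*a)) := by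
            noncomm_ring
        _ = a * b * ((a*c)^(k+2) * a) := by rw [h4]
        _ = a * b * (a*c)^(k+2) * a := by noncomm_ring
  refine ⟨n + 3, ?_⟩
  have hz : a * (b*a)^(n+2) = 0 := by
    rw [key n, pow_succ, hn]  -- (a*c)^(n+1) may not be 0; fix below
    simp
  calc (b*a)^(n+3) = b * (a * (b*a)^(n+2)) := by rw [pow_succ', mul_assoc]
    _ = 0 := by rw [hz, mul_zero]
end

section
/- Let R be a ring with identity and a, b, c ∈ R satisfy a(ba)² = abaca = acaba = (ac)²a. Then 1 - ac is a unit in R if and only if 1 - ba is a unit in R. Moreover, if s = (1-ac)⁻¹, then (1-ba)⁻¹ = (1 + bsa)(1 + ba) - bsa. -/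
private theorem jac {R : Type*} [Ring R] (x y : R) (h : IsUnit (1 - x*y)) :
    IsUnit (1 - y*x) := by
  obtain ⟨u, hu⟩ := h
  have hs1 : (↑u⁻¹ : R) * (1 - x*y) = 1 := by rw [← hu]; exact u.inv_mul
  have hs2 : (1 - x*y) * (↑u⁻¹ : R) = 1 := by rw [← hu]; exact u.mul_inv
  refine isUnit_iff_exists.2 ⟨1 + y*(↑u⁻¹ : R)*x, ?_, ?_⟩
  · have : y * ((1 - x*y) * (↑u⁻¹ : R)) * x = y * x := by rw [hs2]; noncomm_ring
    calc (1 - y*x) * (1 + y*(↑u⁻¹ : R)*x)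
        = 1 + y*(↑u⁻¹:R)*x - y*x - y*(x*y*(↑u⁻¹:R))*x := by noncomm_ring
      _ = 1 + (y*(↑u⁻¹:R)*x - y*(x*y*(↑u⁻¹:R))*x) - y*x := by noncomm_ring
      _ = 1 + y*((1 - x*y)*(↑u⁻¹:R))*x - y*x := by noncomm_ring
      _ = 1 + y*1*x - y*x := by rw [hs2]
      _ = 1 := by noncomm_ring
  · have : y * ((↑u⁻¹ : R) * (1 - x*y)) * x = y * x := by rw [hs1]; noncomm_ring
    calc (1 + y*(↑u⁻¹ : R)*x) * (1 - y*x)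
        = 1 + y*((↑u⁻¹:R)*(1 - x*y))*x - y*x := by noncomm_ring
      _ = 1 + y*1*x - y*x := by rw [hs1]
      _ = 1 := by noncomm_ring

private theorem aux {R : Type*} [Ring R] (a b c : R)
    (h1 : a * (b*a)^2 = a*b*a*c*a) (h2 : a*b*a*c*a = a*c*a*b*a)
    (h3 : a*c*a*b*a = (a*c)^2 * a) (s : R)
    (hs1 : s * (1 - a*c) = 1) (hs2 : (1 - a*c) * s = 1) :
    ((1 + b*s*a) * (1 + b*a) - b*s*a) * (1 - b*a) = 1 ∧
    (1 - b*a) * ((1 + b*s*a) * (1 + b*a) - b*s*a) = 1 := by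
  have h4 : s = 1 + a*c*s := by
    have h : s - a*c*s = 1 := by rw [← hs2]; noncomm_ring
    exact (eq_add_of_sub_eq h)
  have h5 : s = 1 + s*(a*c) := by
    have h : s - s*(a*c) = 1 := by rw [← hs1]; noncomm_ring
    exact (eq_add_of_sub_eq h)
  have h6 : s*(a*c) = s - 1 := by
    have h : s - s*(a*c) = 1 := by rw [← hs1]; noncomm_ring
    rw [← h]; noncomm_ring
  -- main computation lemmas
  have hE_ca : (a*b*a - a*c*a)*(c*a) = 0 := by
    calc (a*b*a - a*c*a)*(c*a) = a*b*a*c*a - (a*c*a)*(c*a) := by noncomm_ring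
      _ = a*c*a*b*a - (a*c*a)*(c*a) := by rw [h2]
      _ = (a*c)^2*a - (a*c*a)*(c*a) := by rw [h3]
      _ = 0 := by noncomm_ring
  have hE_csa : (a*b*a - a*c*a)*(c*(s*a)) = 0 := by
    calc (a*b*a - a*c*a)*(c*(s*a))
        = (a*b*a - a*c*a)*(c*((1 + a*c*s)*a)) := by rw [← h4]
      _ = (a*b*a - a*c*a)*(c*a) + ((a*b*a - a*c*a)*(c*a))*(c*(s*a)) := by noncomm_ring
      _ = 0 := by rw [hE_ca]; noncomm_ring
  have A3 : s*(a*b*a) = a*b*a + (s*a - a - a*c*a) := by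
    calc s*(a*b*a) = (1 + s*(a*c))*(a*b*a) := by rw [← h5]
      _ = a*b*a + s*(a*c*a*b*a) := by noncomm_ring
      _ = a*b*a + s*((a*c)^2*a) := by rw [h3]
      _ = a*b*a + (s*(a*c))*(a*c*a) := by noncomm_ring
      _ = a*b*a + (s - 1)*(a*c*a) := by rw [h6]
      _ = a*b*a + ((s*(a*c))*a - a*c*a) := by noncomm_ring
      _ = a*b*a + ((s - 1)*a - a*c*a) := by rw [h6]
      _ = a*b*a + (s*a - a - a*c*a) := by noncomm_ring
  have k1 : s*(a*b*a) - s*(a*b*a*c*a) = a*b*a := by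
    calc s*(a*b*a) - s*(a*b*a*c*a)
        = (1 + s*(a*c))*(a*b*a) - s*(a*b*a*c*a) := by rw [← h5]
      _ = a*b*a + s*(a*c*a*b*a) - s*(a*b*a*c*a) := by noncomm_ring
      _ = a*b*a + s*(a*c*a*b*a) - s*(a*c*a*b*a) := by rw [h2]
      _ = a*b*a := by noncomm_ring
  have kN : s*(a*b*a) - a*b*a - a*b*(s*(a*b*a)) = 0 := by
    calc s*(a*b*a) - a*b*a - a*b*(s*(a*b*a))
        = (a*b*a + (s*a - a - a*c*a)) - a*b*a
            - a*b*(a*b*a + (s*a - a - a*c*a)) := by rw [A3]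
      _ = (s*a - a*b*(s*a)) - a - a*c*a + a*b*a - (a*(b*a)^2 - a*b*a*c*a) := by
          noncomm_ring
      _ = (s*a - a*b*(s*a)) - a - a*c*a + a*b*a - (a*b*a*c*a - a*b*a*c*a) := by
          rw [h1]
      _ = ((1 + a*c*s)*a - a*b*((1 + a*c*s)*a)) - a - a*c*a + a*b*a := by
          rw [← h4]; noncomm_ring
      _ = (a*c*(s*a) - a*b*(a*c*(s*a))) - a*c*a := by noncomm_ring
      _ = (a*c*((1 + a*c*s)*a) - a*b*(a*c*(s*a))) - a*c*a := by rw [← h4]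
      _ = -((a*b*a - a*c*a)*(c*(s*a))) := by noncomm_ring
      _ = 0 := by rw [hE_csa, neg_zero]
  constructor
  · calc ((1 + b*s*a) * (1 + b*a) - b*s*a) * (1 - b*a)
        = 1 + b*(s*(a*b*a) - s*(a*(b*a)^2)) - b*(a*b*a) := by noncomm_ring
      _ = 1 + b*(s*(a*b*a) - s*(a*b*a*c*a)) - b*(a*b*a) := by rw [h1]
      _ = 1 + b*(a*b*a) - b*(a*b*a) := by rw [k1]
      _ = 1 := by noncomm_ring
  · calc (1 - b*a) * ((1 + b*s*a) * (1 + b*a) - b*s*a)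
        = 1 + b*(s*(a*b*a) - a*b*a - a*b*(s*(a*b*a))) := by noncomm_ring
      _ = 1 + b*(0:R) := by rw [kN]
      _ = 1 := by noncomm_ring

theorem stmt_1 {R : Type*} [Ring R] (a b c : R)
    (h1 : a * (b*a)^2 = a*b*a*c*a) (h2 : a*b*a*c*a = a*c*a*b*a)
    (h3 : a*c*a*b*a = (a*c)^2 * a) :
    (IsUnit (1 - a*c) ↔ IsUnit (1 - b*a)) ∧
    (∀ s : R, s * (1 - a*c) = 1 → (1 - a*c) * s = 1 →
      ((1 + b*s*a) * (1 + b*a) - b*s*a) * (1 - b*a) = 1 ∧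
      (1 - b*a) * ((1 + b*s*a) * (1 + b*a) - b*s*a) = 1) := by
  refine ⟨⟨fun h => ?_, fun h => ?_⟩, fun s hs1 hs2 => aux a b c h1 h2 h3 s hs1 hs2⟩
  · obtain ⟨u, hu⟩ := h
    have hs1 : (↑u⁻¹ : R) * (1 - a*c) = 1 := by rw [← hu]; exact u.inv_mul
    have hs2 : (1 - a*c) * (↑u⁻¹ : R) = 1 := by rw [← hu]; exact u.mul_inv
    obtain ⟨k1, k2⟩ := aux a b c h1 h2 h3 (↑u⁻¹ : R) hs1 hs2
    exact isUnit_iff_exists.2 ⟨_, k2, k1⟩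
  · -- 1 - b*a unit → 1 - a*b unit → (via aux with b,c swapped) 1 - c*a unit → 1 - a*c unit
    have hab : IsUnit (1 - a*b) := by
      have := jac b a (by simpa using h)
      simpa using this
    have h1' : a * (c*a)^2 = a*c*a*b*a := by
      have : a * (c*a)^2 = (a*c)^2*a := by noncomm_ring
      rw [this, ← h3]
    have h2' : a*c*a*b*a = a*b*a*c*a := h2.symm
    have h3' : a*b*a*c*a = (a*b)^2 * a := by
      rw [← h1]; noncomm_ring
    obtain ⟨u, hu⟩ := hab
    have hs1 : (↑u⁻¹ : R) * (1 - a*b) = 1 := by rw [← hu]; exact u.inv_mul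
    have hs2 : (1 - a*b) * (↑u⁻¹ : R) = 1 := by rw [← hu]; exact u.mul_inv
    obtain ⟨k1, k2⟩ := aux a c b h1' h2' h3' (↑u⁻¹ : R) hs1 hs2
    have hca : IsUnit (1 - c*a) := isUnit_iff_exists.2 ⟨_, k2, k1⟩
    have := jac c a hca
    simpa using this
end

section
/- Let R be a ring with identity and a, b, c ∈ R satisfy a(ba)² = abaca = acaba = (ac)²a. If (ac)ⁿ = 0 for some n ∈ ℕ, then (ba)^(n+2) = 0. -/
theorem stmt_2 {R : Type*} [Ring R] (a b c : R)
    (h1 : a * (b*a)^2 = a*b*a*c*a) (h2 : a*b*a*c*a = a*c*a*b*a)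
    (h3 : a*c*a*b*a = (a*c)^2 * a)
    (n : ℕ) (hn : (a*c)^n = 0) : (b*a)^(n+2) = 0 := by
  have key : ∀ k : ℕ, a * (b*a)^(k+1) = (a*c)^k * (a*(b*a)) := by
    intro k
    induction k with
    | zero => simp
    | succ m ih =>
      have : a * (b*a)^(m+2) = (a * (b*a)^(m+1)) * (b*a) := by noncomm_ring
      rw [this, ih]
      have h4 : a*(b*a)*(b*a) = (a*c)*(a*(b*a)) := by
        have := h1.trans h2
        calc a*(b*a)*(b*a) = a*(b*a)^2 := by noncomm_ring
          _ = a*c*a*b*a := this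
          _ = (a*c)*(a*(b*a)) := by noncomm_ring
      calc (a*c)^m * (a*(b*a)) * (b*a) = (a*c)^m * (a*(b*a)*(b*a)) := by noncomm_ring
        _ = (a*c)^m * ((a*c)*(a*(b*a))) := by rw [h4]
        _ = (a*c)^(m+1) * (a*(b*a)) := by noncomm_ring
  have : (b*a)^(n+2) = b * (a * (b*a)^(n+1)) := by rw [pow_succ' (b*a) (n+1), mul_assoc]
  rw [this, key, hn]
  noncomm_ring
end

section
/- Let R be a ring with identity and a, b, c ∈ R satisfy a(ba)² = abaca = acaba = (ac)²a. Set p = 1 - (ac)d for any element d ∈ R commuting with ac satisfying d(ac)d = d (e.g. a g-Drazin inverse of ac). Then (pa)b(pa)b(pa) = (pa)b(pa)c(pa). -/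
theorem stmt_4 {R : Type*} [Ring R] (a b c d : R)
    (h1 : a * (b*a)^2 = a*b*a*c*a) (h2 : a*b*a*c*a = a*c*a*b*a)
    (h3 : a*c*a*b*a = (a*c)^2 * a)
    (hd1 : d * (a*c) = (a*c) * d) (hd2 : d * (a*c) * d = d) :
    let p := 1 - a*c*d
    (p*a) * b * (p*a) * b * (p*a) = (p*a) * b * (p*a) * c * (p*a) := by
  intro p
  have k1 : a*b*a*b*a = a*b*a*c*a := by
    calc a*b*a*b*a = a * (b*a)^2 := by noncomm_ring
    _ = a*b*a*c*a := h1
  have k2 : a*c*a*b*a = a*c*a*c*a := by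
    calc a*c*a*b*a = (a*c)^2 * a := h3
    _ = a*c*a*c*a := by noncomm_ring
  have m : a*c*d*a*b*a = a*c*d*a*c*a := by
    calc a*c*d*a*b*a = d*(a*c)*a*b*a := by rw [hd1]
    _ = d*(a*c*a*b*a) := by noncomm_ring
    _ = d*(a*c*a*c*a) := by rw [k2]
    _ = d*(a*c)*a*c*a := by noncomm_ring
    _ = a*c*d*a*c*a := by rw [hd1]
  simp only [p]
  linear_combination (norm := noncomm_ring)
    (1 - a*c*d) * k1 * (1 - c*d*a) - (1 - a*c*d) * (a*b) * m * (1 - c*d*a)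
end

section
/- Let R be a ring with identity and a, b, c ∈ R satisfy a(ba)² = abaca = acaba = (ac)²a. If d is a Drazin inverse of ac (i.e. d(ac) = (ac)d, d(ac)d = d, and ac - (ac)²d is nilpotent), then e := bd²a is a Drazin inverse of ba: e(ba) = (ba)e, e(ba)e = e, and ba - (ba)²e is nilpotent. -/
theorem stmt_5 {R : Type*} [Ring R] (a b c d : R)
    (h1 : a * (b*a)^2 = a*b*a*c*a) (h2 : a*b*a*c*a = a*c*a*b*a)
    (h3 : a*c*a*b*a = (a*c)^2 * a)
    (hd1 : d * (a*c) = (a*c) * d) (hd2 : d * (a*c) * d = d)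
    (hd3 : IsNilpotent (a*c - (a*c)^2 * d)) :
    let e := b*d^2*a
    e * (b*a) = (b*a) * e ∧ e * (b*a) * e = e ∧
      IsNilpotent (b*a - (b*a)^2 * e) := by
  intro e
  -- open/closed forms of the hypotheses, right-associated
  have O1 : ∀ x : R, a*(b*(a*(b*(a*x)))) = a*(c*(a*(c*(a*x)))) := fun x => by
    simpa only [pow_two, mul_assoc] using congrArg (· * x) ((h1.trans h2).trans h3)
  have O2 : ∀ x : R, a*(b*(a*(c*(a*x)))) = a*(c*(a*(c*(a*x)))) := fun x => by
    simpa only [pow_two, mul_assoc] using congrArg (· * x) (h2.trans h3)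
  have O3 : ∀ x : R, a*(c*(a*(b*(a*x)))) = a*(c*(a*(c*(a*x)))) := fun x => by
    simpa only [pow_two, mul_assoc] using congrArg (· * x) h3
  have C1 : a*(b*(a*(b*a))) = a*(c*(a*(c*a))) := by
    simpa only [pow_two, mul_assoc] using (h1.trans h2).trans h3
  have C2 : a*(b*(a*(c*a))) = a*(c*(a*(c*a))) := by
    simpa only [pow_two, mul_assoc] using h2.trans h3
  have C3 : a*(c*(a*(b*a))) = a*(c*(a*(c*a))) := by
    simpa only [pow_two, mul_assoc] using h3
  -- d-lemmas
  have dacC : d*(a*c) = a*(c*d) := by simpa only [mul_assoc] using hd1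
  have dac : ∀ x : R, d*(a*(c*x)) = a*(c*(d*x)) := fun x => by
    simpa only [mul_assoc] using congrArg (· * x) hd1
  have acd : ∀ x : R, a*(c*(d*x)) = d*(a*(c*x)) := fun x => (dac x).symm
  have dexp : d*(d*(a*c)) = d := by
    have h := hd2; rw [mul_assoc, ← hd1] at h; exact h
  have dexp2 : a*(c*(d*d)) = d := by
    have h := hd2; rw [hd1] at h; simpa only [mul_assoc] using h
  have ddac : ∀ x : R, d*(d*(a*(c*x))) = d*x := fun x => by
    simpa only [mul_assoc] using congrArg (· * x) dexp
  have acdd : ∀ x : R, a*(c*(d*(d*x))) = d*x := fun x => by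
    simpa only [mul_assoc] using congrArg (· * x) dexp2
  -- d·d·(a·b·a) = d·a
  have L1 : d*(d*(a*(b*a))) = d*a := by
    conv_lhs => rw [← dexp]
    simp only [mul_assoc, acd]
    rw [C3]
    simp only [ddac]
  -- a·b·d·d·a = d·a
  have R1 : a*(b*(d*(d*a))) = d*a := by
    conv_lhs => rw [← dexp2]
    simp only [mul_assoc, dac]
    simp only [O2]
    simp only [acdd]
  -- a·b·d·x = a·c·d·x
  have K1 : ∀ x : R, a*(b*(d*x)) = a*(c*(d*x)) := fun x => by
    conv_lhs => rw [← dexp2]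
    conv_lhs => rw [← dexp2]
    simp only [mul_assoc, dac, O2]
    simp only [acdd]
  -- a·b·a·c·d·x = a·c·a·c·d·x
  have Kgen : ∀ x : R, a*(b*(a*(c*(d*x)))) = a*(c*(a*(c*(d*x)))) := fun x => by
    conv_lhs => rw [← dexp2]
    simp only [mul_assoc, O2]
    simp only [acdd]
  have KgenC : a*(b*(a*(c*d))) = a*(c*(a*(c*d))) := by
    conv_lhs => rw [← dexp2]
    simp only [mul_assoc, O2]
    rw [dexp2]
  -- d·a·b·a·x = d·a·c·a·x
  have DABAo : ∀ x : R, d*(a*(b*(a*x))) = d*(a*(c*(a*x))) := fun x => by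
    conv_lhs => rw [← dexp]
    simp only [mul_assoc, O3]
    simp only [ddac]
  have DABA : d*(a*(b*a)) = d*(a*(c*a)) := by
    conv_lhs => rw [← dexp]
    simp only [mul_assoc]
    rw [C3]
    simp only [ddac]
  refine ⟨?_, ?_, ?_⟩
  · show (b*d^2*a) * (b*a) = (b*a) * (b*d^2*a)
    simp only [pow_two, mul_assoc]
    rw [L1, R1]
  · show (b*d^2*a) * (b*a) * (b*d^2*a) = b*d^2*a
    simp only [pow_two, mul_assoc]
    rw [R1, K1 a, ddac (d*a)]
  · -- nilpotency
    show IsNilpotent (b*a - (b*a)^2 * (b*d^2*a))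
    have E1 : (b*a)^2 * (b*d^2*a) = b*(a*(c*(d*a))) := by
      simp only [pow_two, mul_assoc]
      rw [R1, K1 a]
    have Z1 : d*(a*c - (a*c)^2*d) = 0 := by
      simp only [mul_sub, pow_two, mul_assoc, dacC, dac, dexp2, sub_self]
    have Z1' : ∀ x : R, d*((a*c - (a*c)^2*d)*x) = 0 := fun x => by
      rw [← mul_assoc, Z1, zero_mul]
    have W1 : (a*c - (a*c)^2*d) * (a*c - (a*c)^2*d) = (a*c)*(a*c - (a*c)^2*d) := by
      rw [sub_mul, mul_assoc ((a*c)^2) d _, Z1, mul_zero, sub_zero]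
    have Wstep : ∀ i : ℕ, (a*c - (a*c)^2*d)^(i+2) = (a*c)*(a*c - (a*c)^2*d)^(i+1) := by
      intro i
      induction i with
      | zero => rw [pow_two, pow_one, W1]
      | succ i ih => rw [pow_succ, ih, mul_assoc, ← pow_succ, ih]
    have B0 : (a*(b*(1 - a*(c*d))))^2 * a = (a*c - (a*c)^2*d)^2 * a := by
      simp only [pow_two, mul_sub, sub_mul, mul_one, one_mul, mul_assoc]
      simp only [C1, O1, O2, O3, Kgen, KgenC, DABAo, DABA, dac, dacC, acdd, dexp2]

    have Sv : ∀ m : ℕ, (a*(b*(1 - a*(c*d)))) * ((a*c - (a*c)^2*d)^(m+2)*a)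
        = (a*c - (a*c)^2*d)^(m+3)*a := by
      intro m
      have e1 : (a*c - (a*c)^2*d)^(m+2)
          = (a*c)*((a*c - (a*c)^2*d)*(a*c - (a*c)^2*d)^m) := by
        rw [Wstep m, pow_succ']
      have e2 : (a*c - (a*c)^2*d)^(m+3)
          = (a*c)*((a*c)*((a*c - (a*c)^2*d)*(a*c - (a*c)^2*d)^m)) := by
        rw [Wstep (m+1), Wstep m, pow_succ']
      rw [e1, e2]
      simp only [mul_sub, sub_mul, mul_one, one_mul, pow_two, mul_assoc]
      simp only [O2, Kgen, dac, acdd]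
      abel
    have VW : ∀ m : ℕ, (a*(b*(1 - a*(c*d))))^(m+2)*a = (a*c - (a*c)^2*d)^(m+2)*a := by
      intro m
      induction m with
      | zero => exact B0
      | succ m ih =>
        rw [show m+1+2 = m+2+1 from rfl, pow_succ', mul_assoc, ih, Sv m]
    have Npow : ∀ i : ℕ, (b*((1 - a*(c*d))*a))^(i+1)
        = b*((1 - a*(c*d))*((a*(b*(1 - a*(c*d))))^i*a)) := by
      intro i
      induction i with
      | zero => simp only [zero_add, pow_one, pow_zero, one_mul]
      | succ i ih =>
        rw [pow_succ, ih]
        simp only [pow_succ, mul_assoc]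
    obtain ⟨k, hk⟩ := hd3
    refine ⟨k+3, ?_⟩
    have hn : b*a - (b*a)^2*(b*d^2*a) = b*((1 - a*(c*d))*a) := by
      rw [E1]
      simp only [sub_mul, mul_sub, one_mul, mul_assoc]
    rw [hn, show k+3 = k+2+1 from rfl, Npow (k+2), VW k]
    rw [pow_add, hk, zero_mul, zero_mul, mul_zero, mul_zero]
end

section
/- Let R be a ring with identity and a, b, c ∈ R satisfy a(ba)² = abaca = acaba = (ac)²a. Then ac has a Drazin inverse if and only if ba has a Drazin inverse; in that case (ba)^D = b((ac)^D)²a and (ac)^D = a((ba)^D)²c. -/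
def IsDrazinInv {R : Type*} [Ring R] (x y : R) : Prop :=
  x * y = y * x ∧ y * x * y = y ∧ IsNilpotent (x - x^2 * y)

section Aux
variable {R : Type*} [Ring R]

lemma drz_pow_sub (x y : R) (hc : x * y = y * x) (h2 : y * x * y = y) (n : ℕ) :
    (x - x^2 * y)^(n+1) = x^(n+1) - x^(n+2) * y := by
  have key : (x*y)*x = x*(x*y) := by rw [mul_assoc, ← hc]
  have hxp : Commute x (1 - x*y) := by
    show x*(1-x*y) = (1-x*y)*x
    rw [mul_sub, sub_mul, mul_one, one_mul, key]
  have hp : IsIdempotentElem (x*y) := by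
    show (x*y)*(x*y) = x*y
    calc (x*y)*(x*y) = x*(y*x*y) := by noncomm_ring
      _ = x*y := by rw [h2]
  have hidem : IsIdempotentElem (1 - x*y) := hp.one_sub
  have hfac : x - x^2*y = x*(1 - x*y) := by noncomm_ring
  rw [hfac, hxp.mul_pow, hidem.pow_succ_eq, mul_sub, mul_one]
  congr 1
  rw [← mul_assoc, ← pow_succ]

lemma isDrazinInv_iff_pow (x y : R) :
    IsDrazinInv x y ↔ (x*y = y*x ∧ y*x*y = y ∧ ∃ n, x^(n+1) * y = x^n) := by
  constructor
  · rintro ⟨hc, h2, m, hm⟩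
    refine ⟨hc, h2, m+1, ?_⟩
    have hz : (x - x^2*y)^(m+1) = 0 := by rw [pow_succ, hm, zero_mul]
    rw [drz_pow_sub x y hc h2 m] at hz
    exact (sub_eq_zero.mp hz).symm
  · rintro ⟨hc, h2, n, hn⟩
    refine ⟨hc, h2, n+1, ?_⟩
    rw [drz_pow_sub x y hc h2 n]
    rw [show x^(n+2)*y = x*(x^(n+1)*y) by rw [pow_succ']; noncomm_ring, hn, ← pow_succ']
    exact sub_self _

lemma isDrazinInv_unique (x y z : R) (hy : IsDrazinInv x y) (hz : IsDrazinInv x z) : y = z := by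
  rw [isDrazinInv_iff_pow] at hy hz
  obtain ⟨cy, iy, n, hn⟩ := hy
  obtain ⟨cz, iz, m, hm⟩ := hz
  set K := n + m + 1 with hK
  have hKy : x^(K+1)*y = x^K := by
    calc x^(K+1)*y = x^(m+1)*(x^(n+1)*y) := by
          rw [← mul_assoc, ← pow_add, show m+1+(n+1) = K+1 by omega]
      _ = x^(m+1)*x^n := by rw [hn]
      _ = x^K := by rw [← pow_add, show m+1+n = K by omega]
  have hKz : x^(K+1)*z = x^K := by
    calc x^(K+1)*z = x^(n+1)*(x^(m+1)*z) := by
          rw [← mul_assoc, ← pow_add, show n+1+(m+1) = K+1 by omega]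
      _ = x^(n+1)*x^m := by rw [hm]
      _ = x^K := by rw [← pow_add, show n+1+m = K by omega]
  have cyx : Commute x y := cy
  have czx : Commute x z := cz
  have hyp : IsIdempotentElem (x*y) := by
    show (x*y)*(x*y) = x*y
    calc (x*y)*(x*y) = x*(y*x*y) := by noncomm_ring
      _ = x*y := by rw [iy]
  have hzp : IsIdempotentElem (x*z) := by
    show (x*z)*(x*z) = x*z
    calc (x*z)*(x*z) = x*(z*x*z) := by noncomm_ring
      _ = x*z := by rw [iz]
  have hpK : (x*y)^K = x^K*y^K := cyx.mul_pow K
  have hpK' : (x*y)^K = x*y := by rw [hK]; exact hyp.pow_succ_eq (n+m)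
  have hqK : (x*z)^K = x^K*z^K := czx.mul_pow K
  have hqK2 : (x*z)^K = z^K*x^K := by
    rw [hqK]; exact (czx.pow_pow K K).eq
  have hqK' : (x*z)^K = x*z := by rw [hK]; exact hzp.pow_succ_eq (n+m)
  have hxKp : x^K*(x*y) = x^K := by
    rw [← mul_assoc, ← pow_succ]
    exact hKy
  have hqxK : (x*z)*x^K = x^K := by
    calc (x*z)*x^K = x*(z*x^K) := by rw [mul_assoc]
      _ = x*(x^K*z) := by rw [(czx.symm.pow_right K).eq]
      _ = x^K := by rw [← mul_assoc, ← pow_succ']; exact hKz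
  have hqp_p : (x*z)*(x*y) = x*y := by
    calc (x*z)*(x*y) = (x*z)*((x*y)^K) := by rw [hpK']
      _ = (x*z)*(x^K*y^K) := by rw [hpK]
      _ = ((x*z)*x^K)*y^K := by rw [← mul_assoc]
      _ = x^K*y^K := by rw [hqxK]
      _ = (x*y)^K := hpK.symm
      _ = x*y := hpK'
  have hqp_q : (x*z)*(x*y) = x*z := by
    calc (x*z)*(x*y) = ((x*z)^K)*(x*y) := by rw [hqK']
      _ = (z^K*x^K)*(x*y) := by rw [hqK2]
      _ = z^K*(x^K*(x*y)) := by rw [mul_assoc]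
      _ = z^K*x^K := by rw [hxKp]
      _ = (x*z)^K := hqK2.symm
      _ = x*z := hqK'
  have hpq : x*y = x*z := hqp_p.symm.trans hqp_q
  calc y = y*(x*y) := by rw [← mul_assoc, iy]
    _ = y*(x*z) := by rw [hpq]
    _ = (y*x)*z := by rw [mul_assoc]
    _ = (x*y)*z := by rw [cy]
    _ = (x*z)*z := by rw [hpq]
    _ = (z*x)*z := by rw [cz]
    _ = z := iz

end Aux

section Key
variable {R : Type*} [Ring R]

lemma keyLemmaA (a b c d : R)
    (H1 : a*b*a*b*a = a*b*a*c*a) (H2 : a*b*a*c*a = a*c*a*b*a)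
    (H3 : a*c*a*b*a = a*c*a*c*a) (hd : IsDrazinInv (a*c) d) :
    IsDrazinInv (b*a) (b*d^2*a) := by
  obtain ⟨hc, hi, n, hn⟩ := (isDrazinInv_iff_pow _ _).1 hd
  have cda : Commute (a*c) d := hc
  -- basic d identities
  have l1 : (a*c)*d^2 = d := by
    calc (a*c)*d^2 = ((a*c)*d)*d := by noncomm_ring
      _ = (d*(a*c))*d := by rw [hc]
      _ = d := hi
  have l1r : (a*c)*d^3 = d^2 := by
    calc (a*c)*d^3 = ((a*c)*d^2)*d := by noncomm_ring
      _ = d*d := by rw [l1]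
      _ = d^2 := by noncomm_ring
  have l2 : (a*c)^2*d^3 = d := by
    calc (a*c)^2*d^3 = (a*c)*((a*c)*d^3) := by noncomm_ring
      _ = (a*c)*d^2 := by rw [l1r]
      _ = d := l1
  have l3 : (a*c)^3*d^4 = d := by
    calc (a*c)^3*d^4 = (a*c)^2*(((a*c)*d^2)*d^2) := by noncomm_ring
      _ = (a*c)^2*(d*d^2) := by rw [l1]
      _ = (a*c)^2*d^3 := by noncomm_ring
      _ = d := l2
  have m1 : d^2 = (a*c)^2*d^4 := by
    have : (a*c)^2*d^4 = d^2 := by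
      calc (a*c)^2*d^4 = (a*c)*(((a*c)*d^2)*d^2) := by noncomm_ring
        _ = (a*c)*(d*d^2) := by rw [l1]
        _ = (a*c)*d^3 := by noncomm_ring
        _ = d^2 := l1r
    exact this.symm
  have m1' : d^2 = d^4*(a*c)^2 := by
    rw [m1]; exact (cda.pow_pow 2 4).eq
  have l3' : d^4*(a*c)^3 = d := by
    rw [← (cda.pow_pow 3 4).eq]; exact l3
  -- word identities
  have Wab : a*b*a*c*a = a*c*a*c*a := H2.trans H3
  have Wbb : a*b*a*b*a = a*c*a*c*a := H1.trans Wab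
  have W1 : a*b*(a*c)^2 = (a*c)^3 := by
    calc a*b*(a*c)^2 = (a*b*a*c*a)*c := by noncomm_ring
      _ = (a*c*a*c*a)*c := by rw [Wab]
      _ = (a*c)^3 := by noncomm_ring
  have W5 : (a*c)^2*(a*b*a) = (a*c)^3*a := by
    calc (a*c)^2*(a*b*a) = (a*c)*(a*c*a*b*a) := by noncomm_ring
      _ = (a*c)*(a*c*a*c*a) := by rw [H3]
      _ = (a*c)^3*a := by noncomm_ring
  -- D2 : a*b*d^2 = d
  have D2 : a*b*d^2 = d := by
    calc a*b*d^2 = a*b*((a*c)^2*d^4) := by rw [← m1]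
      _ = (a*b*(a*c)^2)*d^4 := by noncomm_ring
      _ = (a*c)^3*d^4 := by rw [W1]
      _ = d := l3
  -- D3 : d^2*(a*b*a) = d*a
  have D3 : d^2*(a*b*a) = d*a := by
    calc d^2*(a*b*a) = (d^4*(a*c)^2)*(a*b*a) := by rw [← m1']
      _ = d^4*((a*c)^2*(a*b*a)) := by noncomm_ring
      _ = d^4*((a*c)^3*a) := by rw [W5]
      _ = (d^4*(a*c)^3)*a := by noncomm_ring
      _ = d*a := by rw [l3']
  -- power transfer
  have Wstep : (a*c)^2*(a*(b*a)) = (a*c)^3*a := by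
    calc (a*c)^2*(a*(b*a)) = (a*c)*(a*c*a*b*a) := by noncomm_ring
      _ = (a*c)*(a*c*a*c*a) := by rw [H3]
      _ = (a*c)^3*a := by noncomm_ring
  have trans_pow : ∀ k, a*(b*a)^(k+2) = (a*c)^(k+2)*a := by
    intro k
    induction k with
    | zero =>
        calc a*(b*a)^2 = a*b*a*b*a := by noncomm_ring
          _ = a*c*a*c*a := Wbb
          _ = (a*c)^2*a := by noncomm_ring
    | succ k ih =>
        calc a*(b*a)^(k+3) = (a*(b*a)^(k+2))*(b*a) := by
              rw [show k+3 = (k+2)+1 by omega, pow_succ, ← mul_assoc]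
          _ = ((a*c)^(k+2)*a)*(b*a) := by rw [ih]
          _ = (a*c)^k*((a*c)^2*(a*(b*a))) := by
              rw [show k+2 = k+2 from rfl, show (a*c)^(k+2) = (a*c)^k*(a*c)^2 from pow_add _ k 2]
              simp only [mul_assoc]
          _ = (a*c)^k*((a*c)^3*a) := by rw [Wstep]
          _ = (a*c)^(k+3)*a := by
              rw [show (a*c)^(k+3) = (a*c)^k*(a*c)^3 from pow_add _ k 3]
              simp only [mul_assoc]
  -- assemble Drazin conditions
  have Dcomm : (b*a)*(b*d^2*a) = (b*d^2*a)*(b*a) := by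
    calc (b*a)*(b*d^2*a) = b*(a*b*d^2)*a := by noncomm_ring
      _ = b*d*a := by rw [D2]
      _ = b*(d*a) := by noncomm_ring
      _ = b*(d^2*(a*b*a)) := by rw [D3]
      _ = (b*d^2*a)*(b*a) := by noncomm_ring
  have Dinv : (b*d^2*a)*(b*a)*(b*d^2*a) = b*d^2*a := by
    calc (b*d^2*a)*(b*a)*(b*d^2*a) = (b*(d^2*(a*b*a)))*(b*d^2*a) := by noncomm_ring
      _ = (b*(d*a))*(b*d^2*a) := by rw [D3]
      _ = (b*d)*(a*b*d^2)*a := by noncomm_ring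
      _ = (b*d)*d*a := by rw [D2]
      _ = b*d^2*a := by noncomm_ring
  have hn' : (a*c)^(n+3)*d = (a*c)^(n+2) := by
    calc (a*c)^(n+3)*d = (a*c)^2*((a*c)^(n+1)*d) := by
          rw [show (a*c)^(n+3) = (a*c)^2*(a*c)^(n+1) by rw [← pow_add]; congr 1; omega]
          rw [mul_assoc]
      _ = (a*c)^2*(a*c)^n := by rw [hn]
      _ = (a*c)^(n+2) := by rw [← pow_add]; congr 1; omega
  have D2c : ∀ t : R, a*(b*(d^2*t)) = d*t := by
    intro t
    calc a*(b*(d^2*t)) = (a*b*d^2)*t := by noncomm_ring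
      _ = d*t := by rw [D2]
  have hn2c : ∀ t : R, (a*c)^(n+3)*(d*t) = (a*c)^(n+2)*t := by
    intro t
    rw [← mul_assoc, hn']
  have tp1 : a*(b*a)^(n+3) = (a*c)^(n+3)*a := by
    have := trans_pow (n+1); rwa [show n+1+2 = n+3 by omega] at this
  have tp0 : a*(b*a)^(n+2) = (a*c)^(n+2)*a := trans_pow n
  have split4 : (b*a)^(n+4) = b*(a*(b*a)^(n+3)) := by
    rw [show n+4 = (n+3)+1 by omega, pow_succ', mul_assoc]
  have split3 : (b*a)^(n+3) = b*(a*(b*a)^(n+2)) := by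
    rw [show n+3 = (n+2)+1 by omega, pow_succ', mul_assoc]
  have Dpow : (b*a)^(n+3+1)*(b*d^2*a) = (b*a)^(n+3) := by
    calc (b*a)^(n+4)*(b*d^2*a) = (b*(a*(b*a)^(n+3)))*(b*d^2*a) := by rw [split4]
      _ = (b*((a*c)^(n+3)*a))*(b*d^2*a) := by rw [tp1]
      _ = b*((a*c)^(n+3)*(a*(b*(d^2*a)))) := by simp only [mul_assoc]
      _ = b*((a*c)^(n+3)*(d*a)) := by rw [D2c]
      _ = b*((a*c)^(n+2)*a) := by rw [hn2c]
      _ = b*(a*(b*a)^(n+2)) := by rw [← tp0]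
      _ = (b*a)^(n+3) := split3.symm
  exact (isDrazinInv_iff_pow _ _).2 ⟨Dcomm, Dinv, n+3, Dpow⟩

end Key

section KeyB
variable {R : Type*} [Ring R]

lemma keyLemmaB (a b c e : R)
    (H1 : a*b*a*b*a = a*b*a*c*a) (H2 : a*b*a*c*a = a*c*a*b*a)
    (H3 : a*c*a*b*a = a*c*a*c*a) (he : IsDrazinInv (b*a) e) :
    IsDrazinInv (a*c) (a*e^2*c) := by
  obtain ⟨hc, hi, n, hn⟩ := (isDrazinInv_iff_pow _ _).1 he
  have cbe : Commute (b*a) e := hc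
  -- basic e identities
  have p1 : e^2*(b*a) = e := by
    calc e^2*(b*a) = e*(e*(b*a)) := by noncomm_ring
      _ = e*((b*a)*e) := by rw [← hc]
      _ = (e*(b*a))*e := by noncomm_ring
      _ = e := hi
  have p1' : (b*a)*e^2 = e := by
    calc (b*a)*e^2 = ((b*a)*e)*e := by noncomm_ring
      _ = (e*(b*a))*e := by rw [hc]
      _ = e := hi
  have r1 : (b*a)*e^3 = e^2 := by
    calc (b*a)*e^3 = ((b*a)*e^2)*e := by noncomm_ring
      _ = e*e := by rw [p1']
      _ = e^2 := by noncomm_ring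
  have r2 : (b*a)^2*e^4 = e^2 := by
    calc (b*a)^2*e^4 = (b*a)*(((b*a)*e^2)*e^2) := by noncomm_ring
      _ = (b*a)*(e*e^2) := by rw [p1']
      _ = (b*a)*e^3 := by noncomm_ring
      _ = e^2 := r1
  have q1 : e^2 = (b*a)^2*e^4 := r2.symm
  have q1' : e^2 = e^4*(b*a)^2 := by rw [q1]; exact (cbe.pow_pow 2 4).eq
  have t1 : e^3*(b*a) = e^2 := by
    calc e^3*(b*a) = e*(e^2*(b*a)) := by noncomm_ring
      _ = e*e := by rw [p1]
      _ = e^2 := by noncomm_ring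
  have t2 : e^4*(b*a) = e^3 := by
    calc e^4*(b*a) = e^2*(e^2*(b*a)) := by noncomm_ring
      _ = e^2*e := by rw [p1]
      _ = e^3 := by noncomm_ring
  have q2 : e^4*(b*a)^3 = e := by
    calc e^4*(b*a)^3 = ((e^4*(b*a))*(b*a))*(b*a) := by noncomm_ring
      _ = (e^3*(b*a))*(b*a) := by rw [t2]
      _ = e^2*(b*a) := by rw [t1]
      _ = e := p1
  -- word identities
  have WB1 : (b*a)^2*(c*a) = (b*a)^3 := by
    calc (b*a)^2*(c*a) = b*(a*b*a*c*a) := by noncomm_ring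
      _ = b*(a*b*a*b*a) := by rw [← H1]
      _ = (b*a)^3 := by noncomm_ring
  have HX : a*c*a*b*a = a*b*a*b*a := (H1.trans H2).symm
  have WB2 : a*c*a*(b*a)^2 = a*(b*a)^3 := by
    calc a*c*a*(b*a)^2 = (a*c*a*b*a)*(b*a) := by noncomm_ring
      _ = (a*b*a*b*a)*(b*a) := by rw [HX]
      _ = a*(b*a)^3 := by noncomm_ring
  have EC : e^2*(c*a) = e := by
    calc e^2*(c*a) = (e^4*(b*a)^2)*(c*a) := by rw [← q1']
      _ = e^4*((b*a)^2*(c*a)) := by noncomm_ring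
      _ = e^4*(b*a)^3 := by rw [WB1]
      _ = e := q2
  have E2 : (a*e^2*c)*(a*c) = a*e*c := by
    calc (a*e^2*c)*(a*c) = a*(e^2*(c*a))*c := by noncomm_ring
      _ = a*e*c := by rw [EC]
  have E3 : (a*c)*(a*e^2*c) = a*e*c := by
    calc (a*c)*(a*e^2*c) = a*c*a*e^2*c := by noncomm_ring
      _ = a*c*a*((b*a)^2*e^4)*c := by rw [q1]
      _ = (a*c*a*(b*a)^2)*(e^4*c) := by noncomm_ring
      _ = (a*(b*a)^3)*(e^4*c) := by rw [WB2]
      _ = a*((b*a)^3*e^4)*c := by noncomm_ring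
      _ = a*(e^4*(b*a)^3)*c := by rw [(cbe.pow_pow 3 4).eq]
      _ = a*e*c := by rw [q2]
  have E4 : (a*e^2*c)*(a*c)*(a*e^2*c) = a*e^2*c := by
    calc (a*e^2*c)*(a*c)*(a*e^2*c) = (a*e^2*c)*((a*c)*(a*e^2*c)) := by noncomm_ring
      _ = (a*e^2*c)*(a*e*c) := by rw [E3]
      _ = a*(e^2*(c*a))*(e*c) := by noncomm_ring
      _ = a*e*(e*c) := by rw [EC]
      _ = a*e^2*c := by noncomm_ring
  -- power transfer (same as in A)
  have Wbb : a*b*a*b*a = a*c*a*c*a := H1.trans (H2.trans H3)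
  have Wstep : (a*c)^2*(a*(b*a)) = (a*c)^3*a := by
    calc (a*c)^2*(a*(b*a)) = (a*c)*(a*c*a*b*a) := by noncomm_ring
      _ = (a*c)*(a*c*a*c*a) := by rw [H3]
      _ = (a*c)^3*a := by noncomm_ring
  have trans_pow : ∀ k, a*(b*a)^(k+2) = (a*c)^(k+2)*a := by
    intro k
    induction k with
    | zero =>
        calc a*(b*a)^2 = a*b*a*b*a := by noncomm_ring
          _ = a*c*a*c*a := Wbb
          _ = (a*c)^2*a := by noncomm_ring
    | succ k ih =>
        calc a*(b*a)^(k+3) = (a*(b*a)^(k+2))*(b*a) := by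
              rw [show k+3 = (k+2)+1 by omega, pow_succ, ← mul_assoc]
          _ = ((a*c)^(k+2)*a)*(b*a) := by rw [ih]
          _ = (a*c)^k*((a*c)^2*(a*(b*a))) := by
              rw [show (a*c)^(k+2) = (a*c)^k*(a*c)^2 from pow_add _ k 2]
              simp only [mul_assoc]
          _ = (a*c)^k*((a*c)^3*a) := by rw [Wstep]
          _ = (a*c)^(k+3)*a := by
              rw [show (a*c)^(k+3) = (a*c)^k*(a*c)^3 from pow_add _ k 3]
              simp only [mul_assoc]
  -- nilpotency condition
  have hbe : (b*a)^(n+4)*(e^2*c) = (b*a)^(n+2)*c := by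
    calc (b*a)^(n+4)*(e^2*c) = (b*a)^(n+3)*(((b*a)*e^2)*c) := by
          rw [show n+4 = (n+3)+1 by omega, pow_succ]
          simp only [mul_assoc]
      _ = (b*a)^(n+3)*(e*c) := by rw [p1']
      _ = (b*a)^2*(((b*a)^(n+1)*e)*c) := by
          rw [show (b*a)^(n+3) = (b*a)^2*(b*a)^(n+1) from by rw [← pow_add]; congr 1; omega]
          simp only [mul_assoc]
      _ = (b*a)^2*((b*a)^n*c) := by rw [hn]
      _ = (b*a)^(n+2)*c := by
          rw [show (b*a)^(n+2) = (b*a)^2*(b*a)^n from by rw [← pow_add]; congr 1; omega]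
          simp only [mul_assoc]
  have tp2 : a*(b*a)^(n+4) = (a*c)^(n+4)*a := by
    have := trans_pow (n+2); rwa [show n+2+2 = n+4 by omega] at this
  have tp0 : a*(b*a)^(n+2) = (a*c)^(n+2)*a := trans_pow n
  have Dpow : (a*c)^(n+3+1)*(a*e^2*c) = (a*c)^(n+3) := by
    calc (a*c)^(n+4)*(a*e^2*c) = ((a*c)^(n+4)*a)*(e^2*c) := by simp only [mul_assoc]
      _ = (a*(b*a)^(n+4))*(e^2*c) := by rw [← tp2]
      _ = a*((b*a)^(n+4)*(e^2*c)) := by simp only [mul_assoc]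
      _ = a*((b*a)^(n+2)*c) := by rw [hbe]
      _ = ((a*c)^(n+2)*a)*c := by rw [← mul_assoc, tp0]
      _ = (a*c)^(n+3) := by
          have split : (a*c)^(n+3) = (a*c)^(n+2)*(a*c) := by
            rw [show n+3 = (n+2)+1 by omega]; exact pow_succ _ _
          rw [split, mul_assoc]
  exact (isDrazinInv_iff_pow _ _).2 ⟨E3.trans E2.symm, E4, n+3, Dpow⟩

end KeyB


theorem stmt_6 {R : Type*} [Ring R] (a b c : R)
    (h1 : a * (b*a)^2 = a*b*a*c*a) (h2 : a*b*a*c*a = a*c*a*b*a)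
    (h3 : a*c*a*b*a = (a*c)^2 * a) :
    ((∃ d, IsDrazinInv (a*c) d) ↔ (∃ e, IsDrazinInv (b*a) e)) ∧
    (∀ d e, IsDrazinInv (a*c) d → IsDrazinInv (b*a) e →
      e = b * d^2 * a ∧ d = a * e^2 * c) := by
  have H1 : a*b*a*b*a = a*b*a*c*a := by rw [← h1]; noncomm_ring
  have H3 : a*c*a*b*a = a*c*a*c*a := by rw [h3]; noncomm_ring
  constructor
  · constructor
    · rintro ⟨d, hd⟩
      exact ⟨b*d^2*a, keyLemmaA a b c d H1 h2 H3 hd⟩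
    · rintro ⟨e, he⟩
      exact ⟨a*e^2*c, keyLemmaB a b c e H1 h2 H3 he⟩
  · intro d e hd he
    exact ⟨isDrazinInv_unique (b*a) e (b*d^2*a) he (keyLemmaA a b c d H1 h2 H3 hd),
           isDrazinInv_unique (a*c) d (a*e^2*c) hd (keyLemmaB a b c e H1 h2 H3 he)⟩
end

section
/- Let R be a ring with identity, k ∈ ℕ with k ≥ 1, and a, b, c ∈ R satisfy a(ba)² = abaca = acaba = (ac)²a. Then (ac)^k has a Drazin inverse if and only if (ba)^k has a Drazin inverse. -/
section Aux

variable {R : Type*} [Ring R]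

private lemma idem_pow {e : R} (he : e * e = e) (n : ℕ) : e ^ (n+1) = e := by
  induction n with
  | zero => simp
  | succ m ih => rw [pow_succ, ih, he]

private lemma mul_pow_succ_eq (a b : R) (j : ℕ) :
    (a*b)^(j+1) = a*(b*a)^j*b := by
  induction j with
  | zero => simp
  | succ i ih =>
    calc (a*b)^(i+1+1) = (a*b)^(i+1)*(a*b) := pow_succ _ _
    _ = (a*(b*a)^i*b)*(a*b) := by rw [ih]
    _ = a*((b*a)^i*(b*a))*b := by simp only [mul_assoc]
    _ = a*(b*a)^(i+1)*b := by rw [← pow_succ]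

/-- The double-commutant property: if `y` is a Drazin-type inverse of `z`
(with `z^N = z^(N+1) * y`) and `u` commutes with `z`, then `u` commutes with `y`. -/
private lemma drazin_comm {z y u : R} (hc : z * y = y * z) (hy : y * z * y = y)
    (N : ℕ) (hzN : z^N = z^(N+1) * y) (hu : u * z = z * u) : u * y = y * u := by
  have hcu : Commute u z := hu
  have hczy : Commute z y := hc
  have huz : ∀ m : ℕ, u * z^m = z^m * u := fun m => (hcu.pow_right m).eq
  have hzy : ∀ m : ℕ, z^m * y = y * z^m := fun m => (hczy.pow_left m).eq
  have hyyz : y * y * z = y := by rw [mul_assoc, ← hc, ← mul_assoc, hy]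
  have hmym : ∀ m : ℕ, y^(m+1) * z^m = y := by
    intro m
    induction m with
    | zero => simp
    | succ i ih =>
      calc y^(i+1+1) * z^(i+1) = (y*y^(i+1)) * (z^i*z) := by
            rw [pow_succ' y (i+1), pow_succ z i]
      _ = y*(y^(i+1)*z^i)*z := by simp only [mul_assoc]
      _ = y*y*z := by rw [ih]
      _ = y := hyyz
  have hmym' : ∀ m : ℕ, z^m * y^(m+1) = y := by
    intro m
    rw [(hczy.pow_pow m (m+1)).eq, hmym m]
  have hyz1 : y^(N+1) * z^(N+1) = y*z := by
    rw [pow_succ z N, ← mul_assoc, hmym N]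
  have hzy1 : z^(N+1) * y^(N+1) = z*y := by
    rw [pow_succ' z N, mul_assoc, hmym' N]
  have A : y*u = (y*z)*(u*y) := by
    calc y*u = (y^(N+1) * z^N) * u := by rw [hmym N]
    _ = y^(N+1) * (z^N * u) := mul_assoc _ _ _
    _ = y^(N+1) * (u * z^N) := by rw [huz N]
    _ = y^(N+1) * (u * (z^(N+1) * y)) := by rw [hzN]
    _ = y^(N+1) * ((u * z^(N+1)) * y) := by rw [mul_assoc u]
    _ = y^(N+1) * ((z^(N+1) * u) * y) := by rw [huz (N+1)]
    _ = (y^(N+1) * z^(N+1)) * (u * y) := by simp only [mul_assoc]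
    _ = (y*z)*(u*y) := by rw [hyz1]
  have B : u*y = (y*u)*(z*y) := by
    calc u*y = u*(z^N * y^(N+1)) := by rw [hmym' N]
    _ = (u * z^N) * y^(N+1) := (mul_assoc _ _ _).symm
    _ = (z^N * u) * y^(N+1) := by rw [huz N]
    _ = ((z^(N+1)*y) * u) * y^(N+1) := by rw [hzN]
    _ = ((y*z^(N+1)) * u) * y^(N+1) := by rw [hzy (N+1)]
    _ = y*((z^(N+1) * u) * y^(N+1)) := by simp only [mul_assoc]
    _ = y*((u * z^(N+1)) * y^(N+1)) := by rw [huz (N+1)]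
    _ = (y*u)*(z^(N+1) * y^(N+1)) := by simp only [mul_assoc]
    _ = (y*u)*(z*y) := by rw [hzy1]
  calc u*y = (y*u)*(z*y) := B
  _ = ((y*z)*(u*y))*(z*y) := by rw [A]
  _ = (y*z)*u*(y*z*y) := by simp only [mul_assoc]
  _ = (y*z)*u*y := by rw [hy]
  _ = (y*z)*(u*y) := by rw [mul_assoc]
  _ = y*u := A.symm

private lemma drazin_pow {x y : R} (h : IsDrazinInv x y) (k : ℕ) :
    IsDrazinInv (x^k) (y^k) := by
  obtain ⟨hc, hy, n, hn⟩ := h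
  have hxy : Commute x y := hc
  have he : (x*y) * (x*y) = x*y := by
    calc (x*y)*(x*y) = x*(y*x*y) := by simp only [mul_assoc]
    _ = x*y := by rw [hy]
  have he' : (1 - x*y) * (1 - x*y) = 1 - x*y := by
    calc (1-x*y)*(1-x*y) = 1 - x*y - x*y + (x*y)*(x*y) := by noncomm_ring
    _ = 1 - x*y - x*y + x*y := by rw [he]
    _ = 1 - x*y := by noncomm_ring
  have h1 : ∀ m, (y*x)^m * y = y := by
    intro m
    induction m with
    | zero => simp
    | succ j ih =>
      calc (y*x)^(j+1) * y = ((y*x)^j * (y*x)) * y := by rw [pow_succ]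
      _ = (y*x)^j * (y*x*y) := by simp only [mul_assoc]
      _ = y := by rw [hy, ih]
  refine ⟨hxy.pow_pow k k, ?_, ?_⟩
  · have hmul : y^k * x^k = (y*x)^k := (hxy.symm.mul_pow k).symm
    rw [hmul]
    cases k with
    | zero => simp
    | succ j =>
      rw [pow_succ' y j, ← mul_assoc, h1 (j+1)]
  · cases k with
    | zero => simp
    | succ j =>
      have hcomm2 : Commute x (1 - x*y) :=
        (Commute.one_right x).sub_right ((Commute.refl x).mul_right hxy)
      have hfac : x - x^2*y = x * (1 - x*y) := by noncomm_ring
      have key : x^(j+1) - (x^(j+1))^2 * y^(j+1) = (x - x^2*y)^(j+1) := by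
        calc x^(j+1) - (x^(j+1))^2 * y^(j+1)
            = x^(j+1) - x^(j+1) * (x^(j+1) * y^(j+1)) := by rw [sq, mul_assoc]
        _ = x^(j+1) - x^(j+1) * ((x*y)^(j+1)) := by rw [hxy.mul_pow]
        _ = x^(j+1) - x^(j+1) * (x*y) := by rw [idem_pow he j]
        _ = x^(j+1) * (1 - x*y) := by rw [mul_sub, mul_one]
        _ = x^(j+1) * (1 - x*y)^(j+1) := by rw [idem_pow he' j]
        _ = (x * (1 - x*y))^(j+1) := (hcomm2.mul_pow _).symm
        _ = (x - x^2*y)^(j+1) := by rw [hfac]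
      rw [key]
      refine ⟨n, ?_⟩
      rw [← pow_mul, mul_comm, pow_mul, hn, zero_pow (Nat.succ_ne_zero j)]

private lemma drazin_unpow {x y : R} {k : ℕ} (hk : 1 ≤ k) (h : IsDrazinInv (x^k) y) :
    IsDrazinInv x (x^(k-1) * y) := by
  obtain ⟨j, rfl⟩ : ∃ j, k = j + 1 := ⟨k-1, (Nat.succ_pred_eq_of_pos hk).symm⟩
  simp only [Nat.add_sub_cancel]
  obtain ⟨hc, hy, n, hn⟩ := h
  have hzy : Commute (x^(j+1)) y := hc
  have hxz : x * x^(j+1) = x^(j+1) * x := ((Commute.refl x).pow_right (j+1)).eq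
  have he : (x^(j+1)*y) * (x^(j+1)*y) = x^(j+1)*y := by
    calc (x^(j+1)*y)*(x^(j+1)*y) = x^(j+1)*(y*x^(j+1)*y) := by simp only [mul_assoc]
    _ = x^(j+1)*y := by rw [hy]
  have he' : (1 - x^(j+1)*y) * (1 - x^(j+1)*y) = 1 - x^(j+1)*y := by
    calc (1 - x^(j+1)*y)*(1 - x^(j+1)*y)
        = 1 - x^(j+1)*y - x^(j+1)*y + (x^(j+1)*y)*(x^(j+1)*y) := by noncomm_ring
    _ = 1 - x^(j+1)*y - x^(j+1)*y + x^(j+1)*y := by rw [he]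
    _ = 1 - x^(j+1)*y := by noncomm_ring
  have hcz : Commute (x^(j+1)) (1 - x^(j+1)*y) :=
    (Commute.one_right _).sub_right ((Commute.refl _).mul_right hzy)
  have hfac : x^(j+1) - (x^(j+1))^2*y = x^(j+1) * (1 - x^(j+1)*y) := by
    rw [mul_sub, mul_one, sq, mul_assoc]
  have hn1 : (x^(j+1) - (x^(j+1))^2*y)^(n+1) = 0 := by rw [pow_succ, hn, zero_mul]
  have key0 : (x^(j+1))^(n+1) * (1 - x^(j+1)*y) = 0 := by
    have h0 : (x^(j+1))^(n+1) * (1 - x^(j+1)*y)^(n+1) = 0 := by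
      rw [← hcz.mul_pow, ← hfac, hn1]
    rwa [idem_pow he' n] at h0
  have hzN : (x^(j+1))^(n+1) = (x^(j+1))^(n+1+1) * y := by
    have h0 := key0
    rw [mul_sub, mul_one, sub_eq_zero] at h0
    rw [h0, ← mul_assoc, ← pow_succ]
  have step3 : x * y = y * x := drazin_comm hc hy (n+1) hzN hxz
  refine ⟨?_, ?_, ?_⟩
  · calc x * (x^j * y) = (x * x^j) * y := by rw [mul_assoc]
    _ = x^(j+1) * y := by rw [← pow_succ']
    _ = x^j * (x * y) := by rw [pow_succ x j, mul_assoc]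
    _ = x^j * (y * x) := by rw [step3]
    _ = (x^j * y) * x := by rw [mul_assoc]
  · calc (x^j*y)*x*(x^j*y) = x^j*(y*(x*x^j)*y) := by simp only [mul_assoc]
    _ = x^j*(y*x^(j+1)*y) := by rw [← pow_succ']
    _ = x^j*y := by rw [hy]
  · have hcx : Commute x (1 - x^(j+1)*y) := by
      have h1 : Commute x (x^(j+1)*y) :=
        ((Commute.refl x).pow_right (j+1)).mul_right step3
      exact (Commute.one_right x).sub_right h1
    have hx1 : x - x^2*(x^j*y) = x * (1 - x^(j+1)*y) := by
      have h2 : x^2 * x^j = x * x^(j+1) := by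
        rw [← pow_add, ← pow_succ']
        congr 1
        omega
      calc x - x^2*(x^j*y) = x - (x^2*x^j)*y := by rw [mul_assoc]
      _ = x - (x*x^(j+1))*y := by rw [h2]
      _ = x * (1 - x^(j+1)*y) := by rw [mul_sub, mul_one, mul_assoc]
    refine ⟨j*n + j + n + 1, ?_⟩
    have hexp : j*n + j + n + 1 = (j+1)*(n+1) := by ring
    calc (x - x^2*(x^j*y))^(j*n+j+n+1)
        = (x * (1 - x^(j+1)*y))^(j*n+j+n+1) := by rw [hx1]
    _ = x^(j*n+j+n+1) * (1 - x^(j+1)*y)^(j*n+j+n+1) := hcx.mul_pow _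
    _ = x^(j*n+j+n+1) * (1 - x^(j+1)*y) := by rw [idem_pow he' (j*n+j+n)]
    _ = x^((j+1)*(n+1)) * (1 - x^(j+1)*y) := by rw [hexp]
    _ = (x^(j+1))^(n+1) * (1 - x^(j+1)*y) := by rw [pow_mul]
    _ = 0 := key0

private lemma drazin_cline {x y d : R} (h : IsDrazinInv (x*y) d) :
    IsDrazinInv (y*x) (y*d*d*x) := by
  obtain ⟨hc, hd, m, hm⟩ := h
  have hpdd : x*y*d*d = d := by rw [hc]; exact hd
  have hddp : d*d*(x*y) = d := by
    rw [mul_assoc, ← hc, ← mul_assoc]; exact hd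
  have hleft : (y*x)*(y*d*d*x) = y*d*x := by
    calc (y*x)*(y*d*d*x) = y*(x*y*d*d)*x := by simp only [mul_assoc]
    _ = y*d*x := by rw [hpdd]
  have hright : (y*d*d*x)*(y*x) = y*d*x := by
    calc (y*d*d*x)*(y*x) = y*(d*(d*(x*y)))*x := by simp only [mul_assoc]
    _ = y*d*x := by rw [← mul_assoc d d, hddp]
  refine ⟨?_, ?_, ?_⟩
  · rw [hleft, hright]
  · calc (y*d*d*x)*(y*x)*(y*d*d*x) = (y*d*x)*(y*d*d*x) := by rw [hright]
    _ = y*(d*(x*y)*d)*(d*x) := by simp only [mul_assoc]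
    _ = y*d*(d*x) := by rw [hd]
    _ = y*d*d*x := by simp only [mul_assoc]
  · have hsq : (y*x)^2*(y*d*d*x) = y*(x*y*d*x) := by
      calc (y*x)^2*(y*d*d*x) = y*((x*y)*((x*y*d*d)*x)) := by
            rw [sq]; simp only [mul_assoc]
      _ = y*((x*y)*(d*x)) := by rw [hpdd]
      _ = y*(x*y*d*x) := by simp only [mul_assoc]
    have h3a : (y*x) - (y*x)^2*(y*d*d*x) = y*(x - x*y*d*x) := by
      rw [hsq, mul_sub]
    have hxyd : (x*y*d*x)*y = (x*y)^2*d := by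
      calc (x*y*d*x)*y = (x*y)*(d*(x*y)) := by simp only [mul_assoc]
      _ = (x*y)*(x*y*d) := by rw [← hc]
      _ = (x*y)^2*d := by rw [sq]; simp only [mul_assoc]
    have hty : (x - x*y*d*x)*y = (x*y) - (x*y)^2*d := by
      rw [sub_mul, hxyd]
    refine ⟨m+1, ?_⟩
    rw [h3a, mul_pow_succ_eq, hty, hm, mul_zero, zero_mul]

end Aux

theorem stmt_7 {R : Type*} [Ring R] (k : ℕ) (hk : 1 ≤ k) (a b c : R)
    (h1 : a * (b*a)^2 = a*b*a*c*a) (h2 : a*b*a*c*a = a*c*a*b*a)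
    (h3 : a*c*a*b*a = (a*c)^2 * a) :
    (∃ d, IsDrazinInv ((a*c)^k) d) ↔ (∃ e, IsDrazinInv ((b*a)^k) e) := by
  have key : ∀ x y : R, (∃ d, IsDrazinInv (x*y) d) → (∃ e, IsDrazinInv (y*x) e) := by
    rintro x y ⟨d, hd⟩
    exact ⟨_, drazin_cline hd⟩
  have hpowiff : ∀ (x : R) (m : ℕ), 1 ≤ m →
      ((∃ d, IsDrazinInv (x^m) d) ↔ (∃ d, IsDrazinInv x d)) := by
    intro x m hm
    constructor
    · rintro ⟨d, hd⟩; exact ⟨_, drazin_unpow hm hd⟩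
    · rintro ⟨d, hd⟩; exact ⟨_, drazin_pow hd m⟩
  have hA : a*c*a*c*a = a*b*a*b*a := by
    calc a*c*a*c*a = (a*c)^2*a := by noncomm_ring
    _ = a*c*a*b*a := h3.symm
    _ = a*b*a*c*a := h2.symm
    _ = a*(b*a)^2 := h1.symm
    _ = a*b*a*b*a := by noncomm_ring
  have id1 : (a*c)^3 = a*(b*a*b*a*c) := by
    calc (a*c)^3 = (a*c*a*c*a)*c := by noncomm_ring
    _ = (a*b*a*b*a)*c := by rw [hA]
    _ = a*(b*a*b*a*c) := by noncomm_ring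
  have id2 : (b*a*b*a*c)*a = (b*a)^3 := by
    calc (b*a*b*a*c)*a = b*(a*b*a*c*a) := by noncomm_ring
    _ = b*(a*(b*a)^2) := by rw [← h1]
    _ = (b*a)^3 := by noncomm_ring
  constructor
  · intro hd
    have s1 := (hpowiff (a*c) k hk).mp hd
    have s2 := (hpowiff (a*c) 3 (by norm_num)).mpr s1
    rw [id1] at s2
    have s3 := key _ _ s2
    rw [id2] at s3
    exact (hpowiff (b*a) k hk).mpr ((hpowiff (b*a) 3 (by norm_num)).mp s3)
  · intro hd
    have s1 := (hpowiff (b*a) k hk).mp hd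
    have s2 := (hpowiff (b*a) 3 (by norm_num)).mpr s1
    rw [← id2] at s2
    have s3 := key _ _ s2
    rw [← id1] at s3
    exact (hpowiff (a*c) k hk).mpr ((hpowiff (a*c) 3 (by norm_num)).mp s3)
end

section
/- Let R be a ring with identity and a, b, c ∈ R satisfy a(ba)² = abaca = acaba = (ac)²a. Then a(bab)a(bab)a = a(bab)a(cac)a = a(cac)a(bab)a = a(cac)a(cac)a, i.e. the triple (a, bab, cac) also satisfies the same hypothesis. -/
theorem stmt_8 {R : Type*} [Ring R] (a b c : R)
    (h1 : a * (b*a)^2 = a*b*a*c*a) (h2 : a*b*a*c*a = a*c*a*b*a)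
    (h3 : a*c*a*b*a = (a*c)^2 * a) :
    a*(b*a*b)*a*(b*a*b)*a = a*(b*a*b)*a*(c*a*c)*a ∧
    a*(b*a*b)*a*(c*a*c)*a = a*(c*a*c)*a*(b*a*b)*a ∧
    a*(c*a*c)*a*(b*a*b)*a = a*(c*a*c)*a*(c*a*c)*a := by
  have e1 : a*b*a*b*a = a*b*a*c*a := by rw [← h1]; noncomm_ring
  have e3 : a*c*a*b*a = a*c*a*c*a := by rw [h3]; noncomm_ring
  have e12 : a*b*a*b*a = a*c*a*b*a := e1.trans h2
  have e13 : a*b*a*b*a = a*c*a*c*a := e12.trans e3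
  refine ⟨?_, ?_, ?_⟩
  · calc a*(b*a*b)*a*(b*a*b)*a
        = (a*b*a*b*a)*(b*a*b*a) := by noncomm_ring
      _ = (a*b*a*c*a)*(b*a*b*a) := by rw [e1]
      _ = (a*b*a*c)*(a*b*a*b*a) := by noncomm_ring
      _ = (a*b*a*c)*(a*b*a*c*a) := by rw [e1]
      _ = (a*b)*(a*c*a*b*a)*(c*a) := by noncomm_ring
      _ = (a*b)*(a*b*a*c*a)*(c*a) := by rw [← h2]
      _ = a*(b*a*b)*a*(c*a*c)*a := by noncomm_ring
  · calc a*(b*a*b)*a*(c*a*c)*a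
        = (a*b*a*b*a)*(c*a*c*a) := by noncomm_ring
      _ = (a*c*a*b*a)*(c*a*c*a) := by rw [e12]
      _ = (a*c)*(a*b*a*c*a)*(c*a) := by noncomm_ring
      _ = (a*c)*(a*c*a*b*a)*(c*a) := by rw [h2]
      _ = (a*c*a*c)*(a*b*a*c*a) := by noncomm_ring
      _ = (a*c*a*c)*(a*b*a*b*a) := by rw [← e1]
      _ = a*(c*a*c)*a*(b*a*b)*a := by noncomm_ring
  · calc a*(c*a*c)*a*(b*a*b)*a
        = (a*c*a*c)*(a*b*a*b*a) := by noncomm_ring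
      _ = (a*c*a*c)*(a*c*a*c*a) := by rw [e13]
      _ = a*(c*a*c)*a*(c*a*c)*a := by noncomm_ring
end

section
/- Let R be a ring with identity and a, b, c ∈ R with aba = aca. If ba has a Drazin inverse, then ac has a Drazin inverse and (ba)^D · c = b · (ac)^D. -/
section
variable {R : Type*} [Ring R]

lemma xy_idem {x y : R} (hi : y * x * y = y) : IsIdempotentElem (x*y) := by
  show (x*y)*(x*y) = x*y
  calc (x*y)*(x*y) = x*(y*x*y) := by noncomm_ring
  _ = x*y := by rw [hi]

lemma pow_nilpart {x y : R} (hc : x * y = y * x) (hi : y * x * y = y) (k : ℕ) :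
    (x - x^2*y)^(k+1) = x^(k+1)*(1 - x*y) := by
  have hu : IsIdempotentElem (1 - x*y) := (xy_idem hi).one_sub
  have hcm : Commute x (1 - x*y) := by
    refine (Commute.one_right x).sub_right ?_
    show x*(x*y) = (x*y)*x
    rw [mul_assoc, ← hc]
  have h1 : x - x^2*y = x*(1 - x*y) := by noncomm_ring
  rw [h1, hcm.mul_pow, hu.pow_succ_eq]

lemma ypow {x y : R} (hc : x * y = y * x) (hi : y * x * y = y) (k : ℕ) :
    y = y^(k+1)*x^k := by
  have hy2 : y = y^2*x := by
    calc y = y*x*y := hi.symm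
    _ = y*(x*y) := by rw [mul_assoc]
    _ = y*(y*x) := by rw [hc]
    _ = y^2*x := by noncomm_ring
  induction k with
  | zero => simp
  | succ k ih =>
    calc y = y^(k+1)*x^k := ih
    _ = y^k*y*x^k := by rw [pow_succ]
    _ = y^k*(y^2*x)*x^k := by rw [← hy2]
    _ = (y^k*y^2)*(x*x^k) := by noncomm_ring
    _ = y^(k+2)*x^(k+1) := by rw [← pow_add, ← pow_succ']

lemma drazin_unique {x y z : R} (hy : IsDrazinInv x y) (hz : IsDrazinInv x z) : y = z := by
  obtain ⟨hcy, hiy, ny, hny⟩ := hy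
  obtain ⟨hcz, hiz, nz, hnz⟩ := hz
  obtain ⟨N, hNy, hNz⟩ : ∃ N, (x - x^2*y)^(N+1) = 0 ∧ (x - x^2*z)^(N+1) = 0 := by
    refine ⟨ny + nz, ?_, ?_⟩
    · rw [show ny + nz + 1 = ny + (nz+1) by omega, pow_add, hny, zero_mul]
    · rw [show ny + nz + 1 = nz + (ny+1) by omega, add_comm nz (ny+1), pow_add, hnz, mul_zero]
  rw [pow_nilpart hcy hiy] at hNy
  rw [pow_nilpart hcz hiz] at hNz
  -- x^(N+1) = x^(N+2)*y  and same for z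
  have hxy : x^(N+1) = x^(N+2)*y := by
    rw [mul_sub, mul_one, sub_eq_zero] at hNy
    calc x^(N+1) = x^(N+1)*(x*y) := hNy
    _ = x^(N+2)*y := by rw [← mul_assoc, ← pow_succ]
  have hxz : x^(N+1) = x^(N+2)*z := by
    rw [mul_sub, mul_one, sub_eq_zero] at hNz
    calc x^(N+1) = x^(N+1)*(x*z) := hNz
    _ = x^(N+2)*z := by rw [← mul_assoc, ← pow_succ]
  have hyx_idem : IsIdempotentElem (y*x) := by
    show (y*x)*(y*x) = y*x
    calc (y*x)*(y*x) = (y*x*y)*x := by noncomm_ring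
    _ = y*x := by rw [hiy]
  have hxz_idem : IsIdempotentElem (x*z) := xy_idem hiz
  have hy_eq : y = y*x*z := by
    calc y = y^(N+2)*x^(N+1) := ypow hcy hiy (N+1)
    _ = y^(N+2)*(x^(N+2)*z) := by rw [← hxz]
    _ = (y^(N+2)*x^(N+2))*z := by rw [mul_assoc]
    _ = (y*x)^(N+2)*z := by rw [(Commute.mul_pow ?_ (N+2) : (y*x)^(N+2) = _)]; exact hcy.symm
    _ = (y*x)*z := by rw [hyx_idem.pow_succ_eq]
  have hz_eq : z = y*(x*z) := by
    have hcxz : Commute x z := hcz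
    have hcxy : Commute x y := hcy
    calc z = z^(N+2)*x^(N+1) := ypow hcz hiz (N+1)
    _ = x^(N+1)*z^(N+2) := ((hcxz.symm.pow_pow (N+2) (N+1))).symm ▸ rfl
    _ = x^(N+2)*y*z^(N+2) := by rw [← hxy]
    _ = y*x^(N+2)*z^(N+2) := by rw [(hcxy.pow_left (N+2)).eq]
    _ = y*(x^(N+2)*z^(N+2)) := by rw [mul_assoc]
    _ = y*((x*z)^(N+2)) := by rw [hcxz.mul_pow]
    _ = y*(x*z) := by rw [hxz_idem.pow_succ_eq]
  rw [hz_eq, ← mul_assoc, ← hy_eq]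


lemma drazin_cline_s9 {a b c d : R} (h : a*b*a = a*c*a)
    (hd : IsDrazinInv (b*a) d) : IsDrazinInv (a*c) (a*(d*(d*c))) := by
  obtain ⟨h1, h2, hnil⟩ := hd
  -- flat facts
  have F2 : b*a*d*d = d := by rw [h1, h2]
  have F3 : d*d*b*a = d := by
    rw [mul_assoc (d*d) b a, mul_assoc d d (b*a), ← h1, ← mul_assoc, h2]
  have F4 : d*b*a = b*a*d := by
    rw [mul_assoc d b a, ← h1]
  -- parametrized right-assoc rewrite rules
  have E1 : ∀ x : R, a*(c*(a*x)) = a*(b*(a*x)) := by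
    intro x; simp only [← mul_assoc]; rw [h]
  have E2 : ∀ x : R, b*(a*(d*(d*x))) = d*x := by
    intro x; simp only [← mul_assoc]; rw [F2]
  have E3 : ∀ x : R, d*(d*(b*(a*x))) = d*x := by
    intro x; simp only [← mul_assoc]; rw [F3]
  have E4 : ∀ x : R, d*(b*(a*x)) = b*(a*(d*x)) := by
    intro x; simp only [← mul_assoc]; rw [F4]
  have key1 : (a*c)*(a*(d*(d*c))) = a*(d*c) := by
    simp only [mul_assoc]
    rw [E1 (d*(d*c)), E2 c]
  have key2 : (a*(d*(d*c)))*(a*c) = a*(d*c) := by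
    simp only [mul_assoc]
    rw [← E3 (c*(a*c)), E1 c, E3 (b*(a*c)), E3 c]
  refine ⟨by rw [key1, key2], ?_, ?_⟩
  · -- e * (a*c) * e = e
    rw [key2]
    simp only [mul_assoc]
    rw [← E3 (c*(a*(d*(d*c)))), E1 (d*(d*c)), E2 c, E3 (d*c)]
  · -- nilpotency
    have hsq : (a*c)^2*(a*(d*(d*c))) = a*(b*(a*(d*c))) := by
      rw [pow_two, mul_assoc, key1]
      simp only [mul_assoc]
      rw [E1 (d*c)]
    rw [hsq]
    -- w := a*c - a*(b*(a*(d*c)))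
    set w : R := a*c - a*(b*(a*(d*c))) with hw
    -- the four product simplifications
    have P1 : ∀ t : R, (a*(t*(b*(a*c))))*(a*c) = a*(t*(b*(a*(b*(a*c))))) := by
      intro t; simp only [mul_assoc]; rw [E1 c]
    have P2 : ∀ t : R, (a*(t*(b*(a*c))))*(a*(b*(a*(d*c)))) =
        a*(t*(b*(a*(b*(a*(b*(a*(d*c)))))))) := by
      intro t; simp only [mul_assoc]; rw [E1 (b*(a*(d*c)))]
    have P3 : ∀ t : R, (a*(t*(b*(a*(b*(a*(d*c)))))))*(a*c) =
        a*(t*(b*(a*(b*(a*(b*(a*(d*c)))))))) := by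
      intro t; simp only [mul_assoc]
      rw [← E3 (c*(a*c)), E1 c, E3 (b*(a*c)), E4 c]
    have P4 : ∀ t : R, (a*(t*(b*(a*(b*(a*(d*c)))))))*(a*(b*(a*(d*c)))) =
        a*(t*(b*(a*(b*(a*(b*(a*(d*c)))))))) := by
      intro t; simp only [mul_assoc]
      rw [← E3 (c*(a*(b*(a*(d*c))))), E1 (b*(a*(d*c))), E3 (b*(a*(b*(a*(d*c))))),
          E4 (b*(a*(d*c))), E4 (d*c), E2 c]
    -- main power formula
    have main : ∀ k : ℕ, w^(k+2) =
        a*((b*a)^k*(b*(a*c))) - a*((b*a)^k*(b*(a*(b*(a*(d*c)))))) := by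
      intro k
      induction k with
      | zero =>
        have e1 := P1 (1:R); have e2 := P2 (1:R); have e3 := P3 (1:R); have e4 := P4 (1:R)
        simp only [one_mul] at e1 e2 e3 e4
        have expand : w^2 = ((a*c)*(a*c) - (a*c)*(a*(b*(a*(d*c))))) -
            ((a*(b*(a*(d*c))))*(a*c) - (a*(b*(a*(d*c))))*(a*(b*(a*(d*c))))) := by
          rw [pow_two, hw]; noncomm_ring
        rw [show (0:ℕ)+2 = 2 from rfl, expand]
        have q1 : (a*c)*(a*c) = a*(b*(a*c)) := by simp only [mul_assoc]; rw [E1 c]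
        have q2 : (a*c)*(a*(b*(a*(d*c)))) = a*(b*(a*(b*(a*(d*c))))) := by
          simp only [mul_assoc]; rw [E1 (b*(a*(d*c)))]
        have q3 : (a*(b*(a*(d*c))))*(a*c) = a*(b*(a*(b*(a*(d*c))))) := by
          simp only [mul_assoc]
          rw [← E3 (c*(a*c)), E1 c, E3 (b*(a*c)), E4 c]
        have q4 : (a*(b*(a*(d*c))))*(a*(b*(a*(d*c)))) = a*(b*(a*(b*(a*(d*c))))) := by
          simp only [mul_assoc]
          rw [← E3 (c*(a*(b*(a*(d*c))))), E1 (b*(a*(d*c))), E3 (b*(a*(b*(a*(d*c))))),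
              E4 (b*(a*(d*c))), E4 (d*c), E2 c]
        rw [q1, q2, q3, q4]
        simp only [pow_zero, one_mul]
        abel
      | succ k ih =>
        have step : w^(k+3) = w^(k+2)*w := by rw [← pow_succ]
        rw [step, ih, hw]
        have expand : (a*((b*a)^k*(b*(a*c))) - a*((b*a)^k*(b*(a*(b*(a*(d*c)))))))*
            (a*c - a*(b*(a*(d*c)))) =
            ((a*((b*a)^k*(b*(a*c))))*(a*c) - (a*((b*a)^k*(b*(a*c))))*(a*(b*(a*(d*c))))) -
            ((a*((b*a)^k*(b*(a*(b*(a*(d*c)))))))*(a*c) -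
             (a*((b*a)^k*(b*(a*(b*(a*(d*c)))))))*(a*(b*(a*(d*c))))) := by
          noncomm_ring
        rw [expand, P1 ((b*a)^k), P2 ((b*a)^k), P3 ((b*a)^k), P4 ((b*a)^k)]
        have pw : ∀ x : R, (b*a)^(k+1)*(b*(a*x)) = (b*a)^k*(b*(a*(b*(a*x)))) := by
          intro x
          rw [pow_succ, mul_assoc]
          simp only [mul_assoc]
        rw [pw c, pw (b*(a*(d*c)))]
        abel
    -- conclude nilpotency
    obtain ⟨n, hn⟩ := hnil
    have hcomm : Commute (b*a) (1 - (b*a)*d) := by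
      refine (Commute.one_right (b*a)).sub_right ?_
      show (b*a)*((b*a)*d) = ((b*a)*d)*(b*a)
      rw [h1, ← mul_assoc, h1]
    have hidem : IsIdempotentElem (1 - (b*a)*d) := by
      refine IsIdempotentElem.one_sub ?_
      show ((b*a)*d)*((b*a)*d) = (b*a)*d
      have : ((b*a)*d)*((b*a)*d) = (b*a)*(d*(b*a)*d) := by noncomm_ring
      rw [this, h2]
    have hfac : (b*a) - (b*a)^2*d = (b*a)*(1 - (b*a)*d) := by noncomm_ring
    have hnil1 : ((b*a) - (b*a)^2*d)^(n+1) = 0 := by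
      rw [pow_succ, hn, zero_mul]
    rw [hfac, hcomm.mul_pow, hidem.pow_succ_eq] at hnil1
    rw [mul_sub, mul_one, sub_eq_zero, ← mul_assoc, ← pow_succ] at hnil1
    -- hnil1 : (b*a)^(n+1) = (b*a)^(n+1+1)*d
    have hstep : (b*a)^(n+1+1) = (b*a)^(n+1+1+1)*d := by
      rw [pow_succ' (b*a) (n+1), hnil1, ← mul_assoc, ← pow_succ']
    refine ⟨n+3, ?_⟩
    rw [show n+3 = (n+1)+2 from rfl, main (n+1)]
    have c1 : a*((b*a)^(n+1)*(b*(a*c))) = a*((b*a)^(n+1+1)*c) := by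
      rw [pow_succ (b*a) (n+1), pow_succ (b*a) n]; simp only [mul_assoc]
    have c2 : a*((b*a)^(n+1)*(b*(a*(b*(a*(d*c)))))) = a*((b*a)^(n+1+1+1)*(d*c)) := by
      rw [pow_succ (b*a) (n+1+1), pow_succ (b*a) (n+1), pow_succ (b*a) n]
      simp only [mul_assoc]
    have c3 : (b*a)^(n+1+1+1)*(d*c) = (b*a)^(n+1+1)*c := by
      rw [← mul_assoc, ← hstep]
    rw [c1, c2, c3, sub_self]


end

theorem stmt_9 {R : Type*} [Ring R] (a b c : R) (h : a*b*a = a*c*a)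
    (hba : ∃ d, IsDrazinInv (b*a) d) :
    (∃ e, IsDrazinInv (a*c) e) ∧
    (∀ d e, IsDrazinInv (b*a) d → IsDrazinInv (a*c) e → d * c = b * e) := by
  obtain ⟨d0, hd0⟩ := hba
  refine ⟨⟨_, drazin_cline_s9 h hd0⟩, ?_⟩
  intro d e hd he
  have hce := drazin_cline_s9 h hd
  rw [drazin_unique he hce]
  obtain ⟨h1, h2, -⟩ := hd
  have F2 : b*a*d*d = d := by rw [h1, h2]
  calc d*c = b*a*d*d*c := by rw [F2]
  _ = b*(a*(d*(d*c))) := by simp only [mul_assoc]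
end

section
/- Let R be a ring with identity and a, b, c ∈ R satisfy a(ba)² = abaca = acaba = (ac)²a. If ba is a unit, then ac has a group inverse, i.e. there exists y with (ac)y = y(ac), y(ac)y = y, and (ac)y(ac) = ac. -/
theorem stmt_11 {R : Type*} [Ring R] (a b c : R)
    (h1 : a * (b*a)^2 = a*b*a*c*a) (h2 : a*b*a*c*a = a*c*a*b*a)
    (h3 : a*c*a*b*a = (a*c)^2 * a)
    (hu : IsUnit (b*a)) :
    ∃ y : R, (a*c) * y = y * (a*c) ∧ y * (a*c) * y = y ∧ (a*c) * y * (a*c) = a*c := by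
  set v : R := ↑hu.unit⁻¹ with hvdef
  have hBv : (b*a) * v = 1 := hu.mul_val_inv
  have hvB : v * (b*a) = 1 := hu.val_inv_mul
  have hB : ∀ t : R, b*(a*(v*t)) = t := by
    intro t
    calc b*(a*(v*t)) = ((b*a)*v)*t := by simp only [mul_assoc]
    _ = t := by rw [hBv, one_mul]
  have hC : ∀ t : R, v*(b*(a*t)) = t := by
    intro t
    calc v*(b*(a*t)) = (v*(b*a))*t := by simp only [mul_assoc]
    _ = t := by rw [hvB, one_mul]
  have h12 : (a*(b*a))*(b*a) = (a*c*a)*(b*a) := by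
    have := h1.trans h2
    rw [pow_two, ← mul_assoc] at this
    simpa only [mul_assoc] using this
  have haca : a*c*a = a*(b*a) := (hu.mul_right_cancel h12).symm
  have hA : ∀ t : R, a*(c*(a*t)) = a*(b*(a*t)) := by
    intro t
    have := congrArg (· * t) haca
    simpa only [mul_assoc] using this
  refine ⟨a*(v*(v*c)), ?_, ?_, ?_⟩
  · have L : a*c*(a*(v*(v*c))) = a*(v*c) := by
      simp only [mul_assoc, hA, hB]
    have R' : a*(v*(v*c))*(a*c) = a*(v*c) := by
      simp only [mul_assoc]
      conv_lhs => rw [← hC (c*(a*c))]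
      rw [hA c, hC, hC]
    rw [L, R']
  · simp only [mul_assoc, hA, hB]
    conv_lhs => rw [← hC (c*(a*(v*c)))]
    rw [hA (v*c), hB c, hC]
  · simp only [mul_assoc, hA, hB]
    conv_lhs => rw [← hC (c*(a*c))]
    rw [hA c, hC, hC]
end

section
/- Let R be a ring with identity and a, b, c ∈ R satisfy a(ba)² = abaca = acaba = (ac)²a. Then for every n ≥ 2, a(ba)ⁿ = (ac)ⁿa. -/
theorem stmt_12 {R : Type*} [Ring R] (a b c : R)
    (h1 : a * (b*a)^2 = a*b*a*c*a) (h2 : a*b*a*c*a = a*c*a*b*a)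
    (h3 : a*c*a*b*a = (a*c)^2 * a) :
    ∀ n, 2 ≤ n → a * (b*a)^n = (a*c)^n * a := by
  have step : a * (b*a)^2 = (a*c) * (a * (b*a)) := by
    rw [h1, h2]; noncomm_ring
  have key : ∀ m : ℕ, a * (b*a)^(m+1) = (a*c)^m * (a * (b*a)) := by
    intro m
    induction m with
    | zero => simp
    | succ k ih =>
      have : a * (b*a)^(k+2) = a * (b*a)^2 * (b*a)^k := by
        rw [mul_assoc, ← pow_add]; ring_nf
      rw [this, step, mul_assoc, mul_assoc a (b*a), ← pow_succ', ih,
        pow_succ', mul_assoc]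
      simp [mul_assoc]
  intro n hn
  obtain ⟨m, rfl⟩ : ∃ m, n = m + 2 := ⟨n - 2, by omega⟩
  have := key (m+1)
  rw [this]
  have h4 : (a*c) * (a * (b*a)) = (a*c)^2 * a := by
    rw [← h3]; noncomm_ring
  calc (a*c)^(m+1) * (a * (b*a)) = (a*c)^m * ((a*c) * (a * (b*a))) := by
        rw [pow_succ, mul_assoc]
    _ = (a*c)^m * ((a*c)^2 * a) := by rw [h4]
    _ = (a*c)^(m+2) * a := by rw [← mul_assoc, ← pow_add]
end

section
/- Let R be a ring with identity and a, b, c ∈ R satisfy a(ba)² = abaca = acaba = (ac)²a. Suppose d ∈ R satisfies d(ac) = (ac)d, d(ac)d = d, and ac - (ac)²d is nilpotent. Then for any f ∈ R with f(ba) = (ba)f, the element e = bd²a satisfies fe = ef. -/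
private theorem drazin_dc {R : Type*} [Ring R] (x e : R)
    (hxe : x*e = e*x) (hexe : e*(x*e) = e) (k : ℕ)
    (hk : x^(k+1) = x^(k+1+1)*e) (f : R) (hf : f*x = x*f) : f*e = e*f := by
  have hpe : (x*e)*e = e := by rw [hxe, mul_assoc, hexe]
  have hpp : (x*e)*(x*e) = x*e := by rw [mul_assoc, hexe]
  have hpx : (x*e)*x = x*(x*e) := by rw [mul_assoc, ← hxe]
  have hxkp : x^(k+1)*(x*e) = x^(k+1) := by rw [← mul_assoc, ← pow_succ, ← hk]
  have hcpx : Commute (x*e) x := hpx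
  have hpxK : (x*e)*x^(k+1) = x^(k+1)*(x*e) := (hcpx.pow_right (k+1)).eq
  have hcfx : Commute f x := hf
  have hfxK : f*x^(k+1) = x^(k+1)*f := (hcfx.pow_right (k+1)).eq
  have hP1 : ∀ j : ℕ, x^(j+1)*e^(j+1) = x*e := by
    intro j; induction j with
    | zero => rw [pow_one, pow_one]
    | succ j ih =>
        calc x^(j+1+1)*e^(j+1+1) = (x*x^(j+1))*(e^(j+1)*e) := by
              rw [pow_succ' x (j+1), pow_succ e (j+1)]
          _ = x*((x^(j+1)*e^(j+1))*e) := by rw [mul_assoc, ← mul_assoc (x^(j+1))]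
          _ = x*e := by rw [ih, hpe]
  have hP2 : ∀ j : ℕ, e^(j+1)*x^(j+1) = x*e := by
    intro j; induction j with
    | zero => rw [pow_one, pow_one, hxe]
    | succ j ih =>
        calc e^(j+1+1)*x^(j+1+1) = (e*e^(j+1))*(x^(j+1)*x) := by
              rw [pow_succ' e (j+1), pow_succ x (j+1)]
          _ = e*((e^(j+1)*x^(j+1))*x) := by rw [mul_assoc, ← mul_assoc (e^(j+1))]
          _ = e*((x*e)*x) := by rw [ih]
          _ = (e*x)*(x*e) := by rw [hpx, ← mul_assoc]
          _ = x*e := by rw [← hxe, hpp]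
  have hu : f*(x*e) = x^(k+1)*(f*e^(k+1)) := by
    rw [← hP1 k, ← mul_assoc, hfxK, mul_assoc]
  have hup : (x*e)*(f*(x*e)) = f*(x*e) := by
    calc (x*e)*(f*(x*e)) = (x*e)*(x^(k+1)*(f*e^(k+1))) := by rw [hu]
      _ = ((x*e)*x^(k+1))*(f*e^(k+1)) := by rw [mul_assoc (x*e) (x^(k+1)) (f*e^(k+1))]
      _ = (x^(k+1)*(x*e))*(f*e^(k+1)) := by rw [hpxK]
      _ = x^(k+1)*(f*e^(k+1)) := by rw [hxkp]
      _ = f*(x*e) := by rw [← hu]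
  have hv : (x*e)*f = (e^(k+1)*f)*x^(k+1) := by
    calc (x*e)*f = (e^(k+1)*x^(k+1))*f := by rw [hP2]
      _ = e^(k+1)*(x^(k+1)*f) := by rw [mul_assoc]
      _ = e^(k+1)*(f*x^(k+1)) := by rw [← hfxK]
      _ = (e^(k+1)*f)*x^(k+1) := by rw [mul_assoc]
  have hvp : ((x*e)*f)*(x*e) = (x*e)*f := by
    rw [hv, mul_assoc, hxkp]
  have hfp : f*(x*e) = (x*e)*f := by
    have h2 : (x*e)*(f*(x*e)) = ((x*e)*f)*(x*e) := by rw [mul_assoc (x*e) f (x*e)]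
    rw [← hup, h2, hvp]
  have hfin1 : f*e = (x*e)*(f*e) := by
    calc f*e = (f*(x*e))*e := by rw [mul_assoc, hpe]
      _ = ((x*e)*f)*e := by rw [hfp]
      _ = (x*e)*(f*e) := by rw [mul_assoc]
  have hfin2 : e*f = (x*e)*(f*e) := by
    calc e*f = (e*(x*e))*f := by rw [hexe]
      _ = e*((x*e)*f) := by rw [mul_assoc]
      _ = e*(f*(x*e)) := by rw [← hfp]
      _ = e*((f*x)*e) := by rw [← mul_assoc f x e]
      _ = e*((x*f)*e) := by rw [hf]
      _ = (e*x)*(f*e) := by rw [mul_assoc x f e, ← mul_assoc e x (f*e)]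
      _ = (x*e)*(f*e) := by rw [← hxe]
  rw [hfin1, ← hfin2]

theorem stmt_13 {R : Type*} [Ring R] (a b c d : R)
    (h1 : a * (b*a)^2 = a*b*a*c*a) (h2 : a*b*a*c*a = a*c*a*b*a)
    (h3 : a*c*a*b*a = (a*c)^2 * a)
    (hd1 : d * (a*c) = (a*c) * d) (hd2 : d * (a*c) * d = d)
    (hd3 : IsNilpotent (a*c - (a*c)^2 * d))
    (hdcomm : ∀ y : R, y * (a*c) = (a*c) * y → d * y = y * d) :
    ∀ f : R, f * (b*a) = (b*a) * f → f * (b*d^2*a) = (b*d^2*a) * f := by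
  intro f hf
  have hcomm : Commute (a*c) d := hd1.symm
  have commP : ∀ (i j : ℕ) (w : R), (a*c)^i*(d^j*w) = d^j*((a*c)^i*w) := by
    intro i j w; rw [← mul_assoc, (hcomm.pow_pow i j).eq, mul_assoc]
  have commA1 : ∀ (j : ℕ) (w : R), (a*c)*(d^j*w) = d^j*((a*c)*w) := by
    intro j w; rw [← mul_assoc, (hcomm.pow_right j).eq, mul_assoc]
  have F1 : ∀ w : R, (a*c)*(d*(d*w)) = d*w := by
    intro w
    have h : ((a*c)*d)*d = d := by rw [← hd1]; exact hd2
    rw [← mul_assoc, ← mul_assoc, h]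
  have d2split : ∀ w : R, d^2*w = d*(d*w) := by intro w; rw [pow_two, mul_assoc]
  have dsplit1 : ∀ (j : ℕ) (w : R), d^(j+1)*w = d*(d^j*w) := by
    intro j w; rw [pow_succ', mul_assoc]
  have dmerge : ∀ (i j : ℕ) (w : R), d^i*(d^j*w) = d^(i+j)*w := by
    intro i j w; rw [← mul_assoc, ← pow_add]
  have amerge : ∀ (i j : ℕ) (w : R), (a*c)^i*((a*c)^j*w) = (a*c)^(i+j)*w := by
    intro i j w; rw [← mul_assoc, ← pow_add]
  have asucc : ∀ (n : ℕ) (w : R), (a*c)^n*((a*c)*w) = (a*c)^(n+1)*w := by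
    intro n w; rw [← mul_assoc, ← pow_succ]
  have F2 : ∀ (j : ℕ) (w : R), (a*c)^j*(d^j*(d*w)) = d*w := by
    intro j; induction j with
    | zero => intro w; simp
    | succ j ih =>
      intro w
      calc (a*c)^(j+1)*(d^(j+1)*(d*w))
          = (a*c)^j*((a*c)*(d^j*(d*(d*w)))) := by
            rw [pow_succ (a*c) j, pow_succ d j, mul_assoc (d^j) d (d*w),
              mul_assoc ((a*c)^j) (a*c) (d^j*(d*(d*w)))]
        _ = (a*c)^j*(d^j*((a*c)*(d*(d*w)))) := by rw [commA1]
        _ = (a*c)^j*(d^j*(d*w)) := by rw [F1]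
        _ = d*w := ih w
  have F2sq : ∀ (j : ℕ) (w : R), (a*c)^j*(d^j*(d^2*w)) = d^2*w := by
    intro j w; rw [d2split w]; exact F2 j (d*w)
  have Fp : ∀ (j : ℕ) (w : R), (a*c)^(j+1)*(d^(j+1)*w) = (a*c)*(d*w) := by
    intro j w
    calc (a*c)^(j+1)*(d^(j+1)*w) = (a*c)*((a*c)^j*(d^j*(d*w))) := by
          rw [pow_succ' (a*c) j, pow_succ d j, mul_assoc (d^j) d w,
            mul_assoc (a*c) ((a*c)^j) (d^j*(d*w))]
      _ = (a*c)*(d*w) := by rw [F2]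
  have F11 : ∀ w : R, (a*c)^2*(d^2*w) = (a*c)*(d*w) := by
    intro w; have h := Fp 1 w; norm_num at h; exact h
  have F3 : ∀ w : R, (a*c)^3*(d^3*w) = (a*c)*(d*w) := by
    intro w; have h := Fp 2 w; norm_num at h; exact h
  have f1' : ∀ w : R, d^2*((a*c)*w) = d*w := by
    intro w
    calc d^2*((a*c)*w) = d*(d*((a*c)*w)) := d2split _
      _ = d*((a*c)*(d*w)) := by rw [← mul_assoc d (a*c) w, hd1, mul_assoc]
      _ = (a*c)*(d*(d*w)) := by rw [← mul_assoc, hd1, mul_assoc]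
      _ = d*w := F1 w
  -- sandwich identities
  have S0 : ∀ w : R, a*(b*(a*(b*(a*w)))) = a*(b*(a*(c*(a*w)))) := by
    intro w; have h := congrArg (· * w) h1
    simp only [pow_two, mul_assoc] at h; exact h
  have S1 : ∀ w : R, a*(b*(a*(c*(a*w)))) = a*(c*(a*(b*(a*w)))) := by
    intro w; have h := congrArg (· * w) h2
    simp only [mul_assoc] at h; exact h
  have S2 : ∀ w : R, a*(c*(a*(b*(a*w)))) = (a*c)^2*(a*w) := by
    intro w; have h := congrArg (· * w) h3
    simp only [mul_assoc] at h; exact h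
  have P_ab : ∀ (n : ℕ) (w : R), (a*b)^n*(a*w) = a*((b*a)^n*w) := by
    intro n; induction n with
    | zero => intro w; simp
    | succ n ih =>
      intro w
      calc (a*b)^(n+1)*(a*w) = (a*b)*((a*b)^n*(a*w)) := by
            rw [pow_succ' (a*b) n, mul_assoc ((a*b)) ((a*b)^n) (a*w)]
        _ = (a*b)*(a*((b*a)^n*w)) := by rw [ih]
        _ = a*((b*a)^(n+1)*w) := by
            rw [pow_succ' (b*a) n, mul_assoc (b*a) ((b*a)^n) w,
              mul_assoc a b (a*((b*a)^n*w)), mul_assoc b a ((b*a)^n*w)]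
  have P_ba : ∀ (n : ℕ) (w : R), (b*a)^n*(b*w) = b*((a*b)^n*w) := by
    intro n; induction n with
    | zero => intro w; simp
    | succ n ih =>
      intro w
      calc (b*a)^(n+1)*(b*w) = (b*a)*((b*a)^n*(b*w)) := by
            rw [pow_succ' (b*a) n, mul_assoc ((b*a)) ((b*a)^n) (b*w)]
        _ = (b*a)*(b*((a*b)^n*w)) := by rw [ih]
        _ = b*((a*b)^(n+1)*w) := by
            rw [pow_succ' (a*b) n, mul_assoc (a*b) ((a*b)^n) w,
              mul_assoc b a (b*((a*b)^n*w)), mul_assoc a b ((a*b)^n*w)]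
  have P_I : ∀ (n : ℕ) (w : R), a*((b*a)^(n+2)*w) = (a*c)^(n+2)*(a*w) := by
    intro n; induction n with
    | zero =>
      intro w
      calc a*((b*a)^(0+2)*w) = a*(b*(a*(b*(a*w)))) := by
            norm_num; rw [pow_two (b*a)]; simp only [mul_assoc]
        _ = a*(b*(a*(c*(a*w)))) := S0 w
        _ = a*(c*(a*(b*(a*w)))) := S1 w
        _ = (a*c)^2*(a*w) := S2 w
        _ = (a*c)^(0+2)*(a*w) := by norm_num
    | succ n ih =>
      intro w
      rw [show n+1+2 = n+2+1 by omega]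
      calc a*((b*a)^(n+2+1)*w) = a*((b*a)^(n+2)*((b*a)*w)) := by
            rw [pow_succ (b*a) (n+2), mul_assoc ((b*a)^(n+2)) (b*a) w]
        _ = (a*c)^(n+2)*(a*((b*a)*w)) := ih ((b*a)*w)
        _ = (a*c)^(n+2)*(a*(b*(a*w))) := by rw [mul_assoc b a w]
        _ = (a*c)^(n+1)*((a*c)*(a*(b*(a*w)))) := by
            rw [show n+2 = n+1+1 by omega, pow_succ (a*c) (n+1),
              mul_assoc ((a*c)^(n+1)) (a*c) (a*(b*(a*w)))]
        _ = (a*c)^(n+1)*(a*(c*(a*(b*(a*w))))) := by rw [mul_assoc a c (a*(b*(a*w)))]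
        _ = (a*c)^(n+1)*((a*c)^2*(a*w)) := by rw [S2 w]
        _ = (a*c)^(n+2+1)*(a*w) := by rw [amerge (n+1) 2 (a*w), show n+1+2 = n+2+1 by omega]
  have P_Va1 : ∀ (n : ℕ) (w : R), a*(b*((a*c)^(n+1)*(a*w))) = (a*c)^(n+1)*(a*(b*(a*w))) := by
    intro n; induction n with
    | zero =>
      intro w
      simp only [Nat.zero_add, pow_one]
      calc a*(b*((a*c)*(a*w))) = a*(b*(a*(c*(a*w)))) := by rw [mul_assoc a c (a*w)]
        _ = a*(c*(a*(b*(a*w)))) := S1 w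
        _ = (a*c)*(a*(b*(a*w))) := by rw [mul_assoc a c (a*(b*(a*w)))]
    | succ n ih =>
      intro w
      calc a*(b*((a*c)^(n+1+1)*(a*w)))
          = a*(b*((a*c)^(n+1)*(a*(c*(a*w))))) := by
            rw [pow_succ (a*c) (n+1), mul_assoc ((a*c)^(n+1)) (a*c) (a*w),
              mul_assoc a c (a*w)]
        _ = (a*c)^(n+1)*(a*(b*(a*(c*(a*w))))) := ih (c*(a*w))
        _ = (a*c)^(n+1)*(a*(c*(a*(b*(a*w))))) := by rw [S1 w]
        _ = (a*c)^(n+1+1)*(a*(b*(a*w))) := by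
            rw [← mul_assoc a c (a*(b*(a*w))), asucc (n+1) (a*(b*(a*w)))]
  have Dform : ∀ w : R, d*w = a*(c*(a*(c*(d*(d*(d*w)))))) := by
    intro w
    conv_lhs => rw [← F2 2 w]
    rw [pow_two (a*c), pow_two d]
    simp only [mul_assoc]
  have P_Vd1 : ∀ (n : ℕ) (w : R), a*(b*((a*c)^(n+1)*(d*w))) = (a*c)^(n+1)*(a*(b*(d*w))) := by
    intro n w; rw [Dform w]; exact P_Va1 n _
  have P_Vd10 : ∀ w : R, a*(b*((a*c)*(d*w))) = (a*c)*(a*(b*(d*w))) := by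
    intro w; have h := P_Vd1 0 w; simpa using h
  have P_Vd2 : ∀ (n : ℕ) (w : R),
      a*(b*(a*(b*((a*c)^(n+1)*(d*w))))) = (a*c)^(n+1)*(a*(b*(a*(b*(d*w))))) := by
    intro n w
    calc a*(b*(a*(b*((a*c)^(n+1)*(d*w))))) = a*(b*((a*c)^(n+1)*(a*(b*(d*w))))) := by
          rw [P_Vd1 n w]
      _ = (a*c)^(n+1)*(a*(b*(a*(b*(d*w))))) := P_Va1 n (b*(d*w))
  have P_W : ∀ (n : ℕ) (w : R), (a*b)^(n+2)*((a*c)*w) = (a*c)^(n+3)*w := by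
    intro n w
    calc (a*b)^(n+2)*((a*c)*w) = (a*b)^(n+2)*(a*(c*w)) := by rw [mul_assoc a c w]
      _ = a*((b*a)^(n+2)*(c*w)) := P_ab (n+2) (c*w)
      _ = (a*c)^(n+2)*(a*(c*w)) := P_I n (c*w)
      _ = (a*c)^(n+3)*w := by
          rw [← mul_assoc a c w, asucc (n+2) w, show n+2+1 = n+3 by omega]
  have P_W0 : ∀ w : R, a*(b*(a*(b*((a*c)*w)))) = (a*c)^3*w := by
    intro w
    calc a*(b*(a*(b*((a*c)*w)))) = a*(b*(a*(b*(a*(c*w))))) := by rw [mul_assoc a c w]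
      _ = a*(b*(a*(c*(a*(c*w))))) := S0 (c*w)
      _ = a*(c*(a*(b*(a*(c*w))))) := S1 (c*w)
      _ = (a*c)^2*(a*(c*w)) := S2 (c*w)
      _ = (a*c)^3*w := by rw [← mul_assoc a c w, asucc 2 w]
  have P_Ie : ∀ n : ℕ, (a*c)^(n+2)*a = a*(b*a)^(n+2) := by
    intro n; have h := P_I n 1; rw [mul_one, mul_one] at h; exact h.symm
  -- nilpotency
  obtain ⟨N, hN⟩ := hd3
  have hNil : (a*c - (a*c)^2*d)^(N+1) = 0 := by rw [pow_succ, hN, zero_mul]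
  have hp2 : ((a*c)*d)*((a*c)*d) = (a*c)*d := by
    rw [mul_assoc (a*c) d ((a*c)*d), ← mul_assoc d (a*c) d, hd2]
  have hq2 : (1-(a*c)*d)*(1-(a*c)*d) = 1-(a*c)*d := by
    calc (1-(a*c)*d)*(1-(a*c)*d)
        = 1 - (a*c)*d - (a*c)*d + ((a*c)*d)*((a*c)*d) := by noncomm_ring
      _ = 1-(a*c)*d := by rw [hp2]; noncomm_ring
  have hqpow : ∀ i : ℕ, (1-(a*c)*d)^(i+1) = 1-(a*c)*d := by
    intro i; induction i with
    | zero => rw [pow_one]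
    | succ i ih => rw [pow_succ, ih, hq2]
  have hcq : Commute (a*c) (1-(a*c)*d) :=
    (Commute.one_right (a*c)).sub_right ((Commute.refl (a*c)).mul_right hcomm)
  have hfact : a*c - (a*c)^2*d = (a*c)*(1-(a*c)*d) := by noncomm_ring
  have keyM : (a*c)^(N+1) = (a*c)^(N+1+1)*d := by
    have h0 : ((a*c)*(1-(a*c)*d))^(N+1) = 0 := by rw [← hfact]; exact hNil
    rw [hcq.mul_pow, hqpow N, mul_sub, mul_one] at h0
    have h2 := sub_eq_zero.mp h0
    rw [h2, ← mul_assoc, ← pow_succ]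
  have key1 : ∀ n : ℕ, N+1 ≤ n → ∀ w : R, (a*c)^n*w = (a*c)^(n+1)*(d*w) := by
    intro n hn
    obtain ⟨i, rfl⟩ := Nat.exists_eq_add_of_le hn
    have hE : (a*c)^(N+1+i) = (a*c)^(N+1+i+1)*d := by
      calc (a*c)^(N+1+i) = (a*c)^(N+1)*(a*c)^i := pow_add _ _ _
        _ = ((a*c)^(N+1+1)*d)*(a*c)^i := by rw [keyM]
        _ = (a*c)^(N+1+1)*((a*c)^i*d) := by
            rw [mul_assoc ((a*c)^(N+1+1)) d ((a*c)^i), (hcomm.symm.pow_right i).eq]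
        _ = ((a*c)^(N+1+1)*(a*c)^i)*d := by rw [mul_assoc]
        _ = (a*c)^(N+1+i+1)*d := by rw [← pow_add, show N+1+1+i = N+1+i+1 by omega]
    intro w; rw [hE, mul_assoc]
  have keyJ : ∀ (n : ℕ), N+1 ≤ n → ∀ (j : ℕ) (w : R),
      (a*c)^n*w = (a*c)^(n+j)*(d^j*w) := by
    intro n hn j
    induction j with
    | zero => intro w; simp
    | succ j ih =>
      intro w
      calc (a*c)^n*w = (a*c)^(n+j)*(d^j*w) := ih w
        _ = (a*c)^(n+j+1)*(d*(d^j*w)) := key1 (n+j) (by omega) (d^j*w)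
        _ = (a*c)^(n+(j+1))*(d^(j+1)*w) := by
            rw [← dsplit1 j w, show n+j+1 = n+(j+1) by omega]
  -- A core: e commutes with ba
  have hSS : ∀ v : R, a*(b*(d^2*(a*v))) = (a*c)*(d*(a*(b*(d^2*(a*v))))) := by
    intro v
    calc a*(b*(d^2*(a*v)))
        = a*(b*((a*c)^(N+1)*(d^(N+1)*(d^2*(a*v))))) := by rw [F2sq (N+1) (a*v)]
      _ = a*(b*((a*c)^(N+1)*(d*(d^N*(d^2*(a*v)))))) := by rw [dsplit1 N (d^2*(a*v))]
      _ = (a*c)^(N+1)*(a*(b*(d*(d^N*(d^2*(a*v)))))) := P_Vd1 N _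
      _ = (a*c)^(N+1+(N+1))*(d^(N+1)*(a*(b*(d*(d^N*(d^2*(a*v))))))) :=
            keyJ (N+1) le_rfl (N+1) _
      _ = (a*c)^(N+1)*((a*c)^(N+1)*(d^(N+1)*(a*(b*(d*(d^N*(d^2*(a*v)))))))) := by
            rw [amerge (N+1) (N+1) (d^(N+1)*(a*(b*(d*(d^N*(d^2*(a*v)))))))]
      _ = (a*c)^(N+1)*(d^(N+1)*((a*c)^(N+1)*(a*(b*(d*(d^N*(d^2*(a*v)))))))) := by
            rw [commP (N+1) (N+1) (a*(b*(d*(d^N*(d^2*(a*v))))))]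
      _ = (a*c)^(N+1)*(d^(N+1)*(a*(b*((a*c)^(N+1)*(d*(d^N*(d^2*(a*v)))))))) := by
            rw [P_Vd1 N (d^N*(d^2*(a*v)))]
      _ = (a*c)^(N+1)*(d^(N+1)*(a*(b*((a*c)^(N+1)*(d^(N+1)*(d^2*(a*v))))))) := by
            rw [dsplit1 N (d^2*(a*v))]
      _ = (a*c)^(N+1)*(d^(N+1)*(a*(b*(d^2*(a*v))))) := by rw [F2sq (N+1) (a*v)]
      _ = (a*c)*(d*(a*(b*(d^2*(a*v))))) := Fp N _
  have hAlphaS : ∀ v : R, (a*c)*(a*(b*(d^2*(a*v)))) = a*(b*(d*(a*v))) := by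
    intro v
    calc (a*c)*(a*(b*(d^2*(a*v)))) = (a*c)*(a*(b*(d*(d*(a*v))))) := by
          rw [d2split (a*v)]
      _ = a*(b*((a*c)*(d*(d*(a*v))))) := (P_Vd10 (d*(a*v))).symm
      _ = a*(b*(d*(a*v))) := by rw [F1 (a*v)]
  have hT : ∀ v : R, a*(b*(d^2*(a*v))) = d*(a*(b*(d*(a*v)))) := by
    intro v
    calc a*(b*(d^2*(a*v))) = (a*c)*(d*(a*(b*(d^2*(a*v))))) := hSS v
      _ = ((a*c)*d)*(a*(b*(d^2*(a*v)))) := by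
          rw [mul_assoc (a*c) d (a*(b*(d^2*(a*v))))]
      _ = (d*(a*c))*(a*(b*(d^2*(a*v)))) := by rw [hd1]
      _ = d*((a*c)*(a*(b*(d^2*(a*v))))) := by
          rw [mul_assoc d (a*c) (a*(b*(d^2*(a*v))))]
      _ = d*(a*(b*(d*(a*v)))) := by rw [hAlphaS v]
  have hop : ∀ Z : R, d^2*Z = d^(N+1+2)*((a*c)^(N+1)*Z) := by
    intro Z
    calc d^2*Z = (a*c)^(N+1)*(d^(N+1)*(d^2*Z)) := by rw [F2sq (N+1) Z]
      _ = (a*c)^(N+1)*(d^(N+1+2)*Z) := by rw [dmerge (N+1) 2 Z]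
      _ = d^(N+1+2)*((a*c)^(N+1)*Z) := commP (N+1) (N+1+2) Z
  have hD : ∀ v : R, d^2*(a*(b*(a*v))) = d*(a*(b*(d*(a*v)))) := by
    intro v
    calc d^2*(a*(b*(a*v)))
        = d^(N+1+2)*((a*c)^(N+1)*(a*(b*(a*v)))) := hop _
      _ = d^(N+1+2)*(a*(b*((a*c)^(N+1)*(a*v)))) := by rw [P_Va1 N v]
      _ = d^(N+1+2)*(a*(b*((a*c)^(N+1+(N+1))*(d^(N+1)*(a*v))))) := by
            rw [keyJ (N+1) le_rfl (N+1) (a*v)]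
      _ = d^(N+1+2)*(a*(b*((a*c)^(N+1+(N+1))*(d*(d^N*(a*v)))))) := by
            rw [dsplit1 N (a*v)]
      _ = d^(N+1+2)*(a*(b*((a*c)^(N+1+N+1)*(d*(d^N*(a*v)))))) := by
            rw [show N+1+(N+1) = N+1+N+1 by omega]
      _ = d^(N+1+2)*((a*c)^(N+1+N+1)*(a*(b*(d*(d^N*(a*v)))))) := by
            rw [P_Vd1 (N+1+N) (d^N*(a*v))]
      _ = (a*c)^(N+1+N+1)*(d^(N+1+2)*(a*(b*(d*(d^N*(a*v)))))) := by
            rw [commP (N+1+N+1) (N+1+2) (a*(b*(d*(d^N*(a*v)))))]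
      _ = (a*c)^(N+1)*((a*c)^(N+1)*(d^(N+1)*(d^2*(a*(b*(d*(d^N*(a*v)))))))) := by
            rw [dmerge (N+1) 2 (a*(b*(d*(d^N*(a*v))))),
              amerge (N+1) (N+1) (d^(N+1+2)*(a*(b*(d*(d^N*(a*v)))))),
              show N+1+(N+1) = N+1+N+1 by omega]
      _ = (a*c)^(N+1)*(d^2*(a*(b*(d*(d^N*(a*v)))))) := by
            rw [F2sq (N+1) (a*(b*(d*(d^N*(a*v)))))]
      _ = d^2*((a*c)^(N+1)*(a*(b*(d*(d^N*(a*v)))))) := commP (N+1) 2 _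
      _ = d^2*(a*(b*((a*c)^(N+1)*(d*(d^N*(a*v)))))) := by rw [P_Vd1 N (d^N*(a*v))]
      _ = d^2*(a*(b*((a*c)^(N+1)*(d^(N+1)*(a*v))))) := by rw [dsplit1 N (a*v)]
      _ = d^2*(a*(b*((a*c)*(d*(a*v))))) := by rw [Fp N (a*v)]
      _ = d^2*((a*c)*(a*(b*(d*(a*v))))) := by rw [P_Vd10 (a*v)]
      _ = d*(a*(b*(d*(a*v)))) := f1' _
  have ACore : ∀ v : R, a*(b*(d^2*(a*v))) = d^2*(a*(b*(a*v))) :=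
    fun v => (hT v).trans (hD v).symm
  -- B core
  have BCore : ∀ w : R, d^2*(a*(b*(a*(b*(d^2*(a*w)))))) = d^2*(a*w) := by
    intro w
    calc d^2*(a*(b*(a*(b*(d^2*(a*w))))))
        = d^2*(a*(b*(a*(b*((a*c)^(N+2+1)*(d^(N+2+1)*(d^2*(a*w)))))))) := by
          rw [F2sq (N+2+1) (a*w)]
      _ = d^2*(a*(b*(a*(b*((a*c)^(N+2+1)*(d*(d^(N+2)*(d^2*(a*w))))))))) := by
          rw [dsplit1 (N+2) (d^2*(a*w))]
      _ = d^2*((a*c)^(N+2+1)*(a*(b*(a*(b*(d*(d^(N+2)*(d^2*(a*w))))))))) := by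
          rw [P_Vd2 (N+2) (d^(N+2)*(d^2*(a*w)))]
      _ = (a*c)^(N+2+1)*(d^2*(a*(b*(a*(b*(d*(d^(N+2)*(d^2*(a*w))))))))) := by
          rw [commP (N+2+1) 2 (a*(b*(a*(b*(d*(d^(N+2)*(d^2*(a*w))))))))]
      _ = (a*c)^(N+1)*((a*c)^2*(d^2*(a*(b*(a*(b*(d*(d^(N+2)*(d^2*(a*w)))))))))) := by
          rw [amerge (N+1) 2 (d^2*(a*(b*(a*(b*(d*(d^(N+2)*(d^2*(a*w))))))))),
            show N+1+2 = N+2+1 by omega]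
      _ = (a*c)^(N+1)*((a*c)*(d*(a*(b*(a*(b*(d*(d^(N+2)*(d^2*(a*w)))))))))) := by
          rw [F11 (a*(b*(a*(b*(d*(d^(N+2)*(d^2*(a*w))))))))]
      _ = (a*c)^(N+1+1)*(d*(a*(b*(a*(b*(d*(d^(N+2)*(d^2*(a*w))))))))) := by
          rw [asucc (N+1) (d*(a*(b*(a*(b*(d*(d^(N+2)*(d^2*(a*w)))))))))]
      _ = (a*c)^(N+1)*(a*(b*(a*(b*(d*(d^(N+2)*(d^2*(a*w)))))))) := by
          rw [← key1 (N+1) le_rfl (a*(b*(a*(b*(d*(d^(N+2)*(d^2*(a*w))))))))]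
      _ = a*(b*(a*(b*((a*c)^(N+1)*(d*(d^(N+2)*(d^2*(a*w)))))))) := by
          rw [P_Vd2 N (d^(N+2)*(d^2*(a*w)))]
      _ = a*(b*(a*(b*((a*c)^(N+1)*(d^(N+1)*(d^2*(d^2*(a*w)))))))) := by
          rw [dmerge (N+1) 2 (d^2*(a*w)), ← dsplit1 (N+2) (d^2*(a*w)),
            show N+2+1 = N+1+2 by omega]
      _ = a*(b*(a*(b*(d^2*(d^2*(a*w)))))) := by rw [F2sq (N+1) (d^2*(a*w))]
      _ = a*(b*(a*(b*((a*c)*(d*(d*(d*(d^2*(a*w))))))))) := by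
          rw [F1 (d*(d^2*(a*w))), d2split (d^2*(a*w))]
      _ = (a*c)^3*(d*(d*(d*(d^2*(a*w))))) := P_W0 (d*(d*(d*(d^2*(a*w)))))
      _ = d^2*(a*w) := by
          have h5 : d*(d*(d*(d^2*(a*w)))) = d^3*(d^2*(a*w)) := by
            rw [show (3:ℕ) = 2+1 from rfl, dsplit1 2 (d^2*(a*w)), d2split (d^2*(a*w))]
          rw [h5, F2sq 3 (a*w)]
  -- C core
  have CCore : (b*a)^(N+3+1) = (b*a)^(N+3+1+1)*(b*(d^2*a)) := by
    have hc : (b*a)^(N+3+1+1)*(b*(d^2*a)) = (b*a)^(N+3+1) := by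
      calc (b*a)^(N+3+1+1)*(b*(d^2*a))
          = b*((a*b)^(N+3+1+1)*(d^2*a)) := P_ba (N+3+1+1) (d^2*a)
        _ = b*((a*b)^(N+3+2)*(d^2*a)) := by rw [show N+3+1+1 = N+3+2 by omega]
        _ = b*((a*b)^(N+3+2)*((a*c)*(d*(d*(d*a))))) := by
            rw [F1 (d*a), d2split a]
        _ = b*((a*c)^(N+3+3)*(d*(d*(d*a)))) := by rw [P_W (N+3) (d*(d*(d*a)))]
        _ = b*((a*c)^(N+3)*((a*c)^3*(d*(d*(d*a))))) := by
            rw [amerge (N+3) 3 (d*(d*(d*a)))]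
        _ = b*((a*c)^(N+3)*((a*c)^3*(d^3*a))) := by
            rw [show (3:ℕ) = 2+1 from rfl, dsplit1 2 a, d2split a]
        _ = b*((a*c)^(N+3)*((a*c)*(d*a))) := by rw [F3 a]
        _ = b*((a*c)^(N+3+1)*(d*a)) := by rw [asucc (N+3) (d*a)]
        _ = b*((a*c)^(N+3)*a) := by rw [← key1 (N+3) (by omega) a]
        _ = b*((a*c)^(N+1+2)*a) := by rw [show N+3 = N+1+2 by omega]
        _ = b*(a*(b*a)^(N+1+2)) := by rw [P_Ie (N+1)]
        _ = (b*a)^(N+1+2+1) := by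
            rw [pow_succ' (b*a) (N+1+2), mul_assoc b a ((b*a)^(N+1+2))]
        _ = (b*a)^(N+3+1) := by rw [show N+1+2+1 = N+3+1 by omega]
    exact hc.symm
  -- assemble
  have ACe : a*(b*(d^2*a)) = d^2*(a*(b*a)) := by have h := ACore 1; simpa using h
  have hA : (b*a)*(b*(d^2*a)) = (b*(d^2*a))*(b*a) := by
    calc (b*a)*(b*(d^2*a)) = b*(a*(b*(d^2*a))) := by
          rw [mul_assoc b a (b*(d^2*a))]
      _ = b*(d^2*(a*(b*a))) := by rw [ACe]
      _ = (b*(d^2*a))*(b*a) := by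
          rw [mul_assoc b (d^2*a) (b*a), mul_assoc (d^2) a (b*a)]
  have BCe : d^2*(a*(b*(a*(b*(d^2*a))))) = d^2*a := by have h := BCore 1; simpa using h
  have hB : (b*(d^2*a))*((b*a)*(b*(d^2*a))) = b*(d^2*a) := by
    calc (b*(d^2*a))*((b*a)*(b*(d^2*a)))
        = b*(d^2*(a*(b*(a*(b*(d^2*a)))))) := by simp only [mul_assoc]
      _ = b*(d^2*a) := by rw [BCe]
  have hmain := drazin_dc (b*a) (b*(d^2*a)) hA hB (N+3) CCore f hf
  rw [mul_assoc b (d^2) a]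
  exact hmain
end

section
/- Let A be a complex Banach algebra with identity 1 and a, b, c ∈ A satisfy a(ba)² = abaca = acaba = (ac)²a. Then for every nonzero λ ∈ ℂ, λ·1 - ac is invertible if and only if λ·1 - ba is invertible; consequently σ(ac) ∖ {0} = σ(ba) ∖ {0}. -/
/-- Jacobson's lemma. -/
lemma jac_aux {A : Type*} [Ring A] (x y : A) (h : IsUnit (1 - x*y)) :
    IsUnit (1 - y*x) := by
  obtain ⟨u, hu⟩ := h
  set v : A := ↑u⁻¹ with hv
  have hv1 : v * (1 - x*y) = 1 := by rw [← hu]; exact u.inv_mul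
  have hv2 : (1 - x*y) * v = 1 := by rw [← hu]; exact u.mul_inv
  rw [isUnit_iff_exists]
  refine ⟨1 + y*v*x, ?_, ?_⟩
  · have : (1 - y*x) * (1 + y*v*x) = 1 + y*((1 - x*y)*v - 1)*x := by noncomm_ring
    rw [this, hv2]; noncomm_ring
  · have : (1 + y*v*x) * (1 - y*x) = 1 + y*(v*(1 - x*y) - 1)*x := by noncomm_ring
    rw [this, hv1]; noncomm_ring

/-- Key lemma: under the quintic relations, `1 - b*a` unit implies `1 - c*a` unit. -/
lemma key_aux {A : Type*} [Ring A] (a b c : A)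
    (h1 : a*b*a*b*a = a*b*a*c*a) (h2 : a*b*a*c*a = a*c*a*b*a)
    (h3 : a*c*a*b*a = a*c*a*c*a)
    (h : IsUnit (1 - b*a)) : IsUnit (1 - c*a) := by
  obtain ⟨u, hu⟩ := h
  set v : A := ↑u⁻¹ with hv
  have hv1 : v * (1 - b*a) = 1 := by rw [← hu]; exact u.inv_mul
  have hv2 : (1 - b*a) * v = 1 := by rw [← hu]; exact u.mul_inv
  -- v commutes with b*a
  have hcomm : v * (b*a) = (b*a) * v := by
    have e : v*(1 - b*a) = v - v*(b*a) := by noncomm_ring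
    have e2 : (1 - b*a)*v = v - (b*a)*v := by noncomm_ring
    have h' : v - v*(b*a) = v - (b*a)*v := by rw [← e, ← e2, hv1, hv2]
    exact sub_right_inj.mp h' 
  have hqv : (b*a)*v = v - 1 := by
    have : (b*a)*v = v - (1 - b*a)*v := by noncomm_ring
    rw [this, hv2]
  -- key rewriting identities
  have A1 : a*c*a*(b*a*(b*a)) = a*b*a*b*a*(b*a) := by
    calc a*c*a*(b*a*(b*a)) = (a*c*a*b*a)*(b*a) := by noncomm_ring
      _ = (a*b*a*b*a)*(b*a) := by rw [← h2, ← h1]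
      _ = a*b*a*b*a*(b*a) := by noncomm_ring
  have A3 : b*a*(b*a)*(c*a) = b*a*(b*a)*(b*a) := by
    calc b*a*(b*a)*(c*a) = b*(a*b*a*c*a) := by noncomm_ring
      _ = b*(a*b*a*b*a) := by rw [← h1]
      _ = b*a*(b*a)*(b*a) := by noncomm_ring
  have hq3 : b*a*(b*a)*(b*a)*v = b*a*(b*a)*(v-1) := by
    calc b*a*(b*a)*(b*a)*v = b*a*(b*a)*((b*a)*v) := by noncomm_ring
      _ = b*a*(b*a)*(v-1) := by rw [hqv]
  set w : A := 1 + c*a + c*a*c*a + c*(a*(b*a*(b*a)))*v with hw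
  rw [isUnit_iff_exists]
  refine ⟨w, ?_, ?_⟩
  · have e1 : (1 - c*a)*w
        = 1 + c*(a*(b*a*(b*a)))*v - c*(a*c*a*c*a) - c*(a*c*a*(b*a*(b*a)))*v := by
      rw [hw]; noncomm_ring
    rw [e1, ← h3, ← h2, ← h1]
    have e2 : a*c*a*(b*a*(b*a)) = a*(b*a*(b*a)*(b*a)) := by
      rw [A1]; noncomm_ring
    rw [e2]
    have e3 : c*(a*(b*a*(b*a)*(b*a)))*v = c*(a*(b*a*(b*a)*(b*a)*v)) := by
      noncomm_ring
    rw [e3, hq3]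
    noncomm_ring
  · have e1 : w*(1 - c*a)
        = 1 + c*(a*(b*a*(b*a)))*v - c*(a*c*a*c*a) - c*(a*(b*a*(b*a)*(v*(c*a)))) := by
      rw [hw]; noncomm_ring
    rw [e1, ← h3, ← h2, ← h1]
    have c1 : (b*a)*v = v*(b*a) := hcomm.symm
    have e2 : b*a*(b*a)*(v*(c*a)) = b*a*(b*a)*(b*a)*v := by
      calc b*a*(b*a)*(v*(c*a)) = (b*a)*(((b*a)*v)*(c*a)) := by noncomm_ring
        _ = (b*a)*((v*(b*a))*(c*a)) := by rw [c1]
        _ = ((b*a)*v)*((b*a)*(c*a)) := by noncomm_ring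
        _ = (v*(b*a))*((b*a)*(c*a)) := by rw [c1]
        _ = v*(b*a*(b*a)*(c*a)) := by noncomm_ring
        _ = v*(b*a*(b*a)*(b*a)) := by rw [A3]
        _ = (v*(b*a))*((b*a)*(b*a)) := by noncomm_ring
        _ = ((b*a)*v)*((b*a)*(b*a)) := by rw [hcomm]
        _ = (b*a)*((v*(b*a))*(b*a)) := by noncomm_ring
        _ = (b*a)*(((b*a)*v)*(b*a)) := by rw [hcomm]
        _ = ((b*a)*(b*a))*(v*(b*a)) := by noncomm_ring
        _ = ((b*a)*(b*a))*((b*a)*v) := by rw [hcomm]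
        _ = b*a*(b*a)*(b*a)*v := by noncomm_ring
    rw [e2]
    have e3 : c*(a*(b*a*(b*a)*(b*a)*v)) = c*(a*(b*a*(b*a)*((b*a)*v))) := by
      noncomm_ring
    rw [e3, hqv]
    noncomm_ring

theorem stmt_14 {A : Type*} [NormedRing A] [NormedAlgebra ℂ A] [CompleteSpace A]
    (a b c : A)
    (h1 : a * (b*a)^2 = a*b*a*c*a) (h2 : a*b*a*c*a = a*c*a*b*a)
    (h3 : a*c*a*b*a = (a*c)^2 * a) :
    (∀ l : ℂ, l ≠ 0 → (IsUnit (algebraMap ℂ A l - a*c) ↔ IsUnit (algebraMap ℂ A l - b*a))) ∧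
    spectrum ℂ (a*c) \ {0} = spectrum ℂ (b*a) \ {0} := by
  have h1e : a*b*a*b*a = a*b*a*c*a := by rw [← h1]; noncomm_ring
  have h3e : a*c*a*b*a = a*c*a*c*a := by rw [h3]; noncomm_ring
  have main : ∀ l : ℂ, l ≠ 0 →
      (IsUnit (algebraMap ℂ A l - a*c) ↔ IsUnit (algebraMap ℂ A l - b*a)) := by
    intro l hl
    set a' : A := l⁻¹ • a with ha'
    -- scaled relations
    have hs1 : a'*b*a'*b*a' = a'*b*a'*c*a' := by
      rw [ha']
      simp only [smul_mul_assoc, mul_smul_comm, smul_smul]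
      rw [h1e]
    have hs2 : a'*b*a'*c*a' = a'*c*a'*b*a' := by
      rw [ha']
      simp only [smul_mul_assoc, mul_smul_comm, smul_smul]
      rw [h2]
    have hs3 : a'*c*a'*b*a' = a'*c*a'*c*a' := by
      rw [ha']
      simp only [smul_mul_assoc, mul_smul_comm, smul_smul]
      rw [h3e]
    have hiff : IsUnit (1 - c*a') ↔ IsUnit (1 - b*a') :=
      ⟨key_aux a' c b hs3.symm hs2.symm hs1.symm, key_aux a' b c hs1 hs2 hs3⟩
    -- relate to the λ-shifted elements
    have hlu : IsUnit (algebraMap ℂ A l) := (Ne.isUnit hl).map (algebraMap ℂ A)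
    have hred : ∀ x : A, IsUnit (algebraMap ℂ A l - x) ↔ IsUnit (1 - l⁻¹ • x) := by
      intro x
      have heq : algebraMap ℂ A l - x = algebraMap ℂ A l * (1 - l⁻¹ • x) := by
        rw [mul_sub, mul_one, Algebra.mul_smul_comm, ← Algebra.smul_def, smul_smul,
          inv_mul_cancel₀ hl, one_smul]
      rw [heq, ← hlu.unit_spec]
      exact hlu.unit.isUnit_units_mul _
    have hac : l⁻¹ • (a*c) = a' * c := by rw [ha', smul_mul_assoc]
    have hba : l⁻¹ • (b*a) = b * a' := by rw [ha', mul_smul_comm]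
    rw [hred (a*c), hred (b*a), hac, hba]
    exact ⟨fun h => hiff.mp (jac_aux a' c h), fun h => jac_aux c a' (hiff.mpr h)⟩
  refine ⟨main, ?_⟩
  ext l
  simp only [Set.mem_diff, Set.mem_singleton_iff, spectrum.mem_iff]
  constructor
  · rintro ⟨hm, h0⟩
    exact ⟨fun hu => hm ((main l h0).mpr hu), h0⟩
  · rintro ⟨hm, h0⟩
    exact ⟨fun hu => hm ((main l h0).mp hu), h0⟩
end

section
/- Let R be a ring with identity and a, b, c ∈ R satisfy a(ba)² = abaca = acaba = (ac)²a. Suppose d ∈ R commutes with ac and d(ac)d = d. Then e = bd²a satisfies e(ba)e = e. -/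
theorem stmt_17 {R : Type*} [Ring R] (a b c d : R)
    (h1 : a * (b*a)^2 = a*b*a*c*a) (h2 : a*b*a*c*a = a*c*a*b*a)
    (h3 : a*c*a*b*a = (a*c)^2 * a)
    (hd1 : d * (a*c) = (a*c) * d) (hd2 : d * (a*c) * d = d) :
    (b*d^2*a) * (b*a) * (b*d^2*a) = b*d^2*a := by
  have habab : ∀ x : R, a*(b*(a*(b*(a*x)))) = a*(c*(a*(c*(a*x)))) := by
    intro x
    have h' : a*(b*(a*(b*a))) = a*(c*(a*(c*a))) := by
      simpa [pow_two, mul_assoc] using h1.trans (h2.trans h3)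
    calc a*(b*(a*(b*(a*x)))) = (a*(b*(a*(b*a))))*x := by simp [mul_assoc]
      _ = (a*(c*(a*(c*a))))*x := by rw [h']
      _ = a*(c*(a*(c*(a*x)))) := by simp [mul_assoc]
  have hdd : d*(d*(a*c)) = d := by
    calc d*(d*(a*c)) = d*((a*c)*d) := by rw [← hd1]
      _ = d*(a*c)*d := by simp [mul_assoc]
      _ = d := hd2
  have hdd' : a*(c*(d*d)) = d := by
    calc a*(c*(d*d)) = ((a*c)*d)*d := by simp [mul_assoc]
      _ = (d*(a*c))*d := by rw [hd1]
      _ = d := hd2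
  have k : ∀ x : R, d*(d*(a*(c*x))) = d*x := by
    intro x
    calc d*(d*(a*(c*x))) = (d*(d*(a*c)))*x := by simp [mul_assoc]
      _ = d*x := by rw [hdd]
  have k2 : ∀ x : R, a*(c*(d*(d*x))) = d*x := by
    intro x
    calc a*(c*(d*(d*x))) = (a*(c*(d*d)))*x := by simp [mul_assoc]
      _ = d*x := by rw [hdd']
  have main : d*(d*(a*(b*(a*(b*(d*(d*a))))))) = d*(d*a) := by
    calc d*(d*(a*(b*(a*(b*(d*(d*a)))))))
        = d*(d*(a*(b*(a*(b*(a*(c*(d*(d*(d*a)))))))))) := by rw [k2]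
      _ = d*(d*(d*(a*(c*(a*(b*(a*(b*(a*(c*(d*(d*(d*a))))))))))))) := by rw [k]
      _ = d*(d*(d*(a*(c*(a*(c*(a*(c*(a*(c*(d*(d*(d*a))))))))))))) := by rw [habab]
      _ = d*(d*(a*(c*(a*(c*(a*(c*(d*(d*(d*a)))))))))) := by rw [k]
      _ = d*(a*(c*(a*(c*(d*(d*(d*a))))))) := by rw [k]
      _ = d*(a*(c*(d*(d*a)))) := by rw [k2]
      _ = d*(d*a) := by rw [k2]
  calc (b*d^2*a) * (b*a) * (b*d^2*a)
      = b*(d*(d*(a*(b*(a*(b*(d*(d*a)))))))) := by simp [pow_two, mul_assoc]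
    _ = b*(d*(d*a)) := by rw [main]
    _ = b*d^2*a := by simp [pow_two, mul_assoc]
end
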